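/- arXiv:2201.10825 — 7 statements merged into one kernel-verified Lean document; each statement's English description precedes it below -/
import Mathlib

section
/- Any strategy induced by a Mealy machine with randomised initialisation but deterministic outputs and deterministic updates (an RDD strategy) in a game assigns positive probability to at least one infinite play, provided the game's transition function is deterministic. Hence there is no RDD strategy outcome-equivalent to the uniform coin-flipping strategy in the one-state two-action game. -/
open Filter
open scoped Classical

/-- A Mealy machine with randomised initialisation and deterministic outputs
and updates (RDD), with memory `Fin n`. -/
structure RDDMachine (n : ℕ) (S A : Type) where
  init : Fin n → ℝ
  next : Fin n → S → A
  up : Fin n → S → A → Fin n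

/-- One step of the deterministic dynamics of an RDD machine in a game with
deterministic transition function `trans`. -/
def confStep {n : ℕ} {S A : Type} (trans : S → A → S) (N : RDDMachine n S A) :
    Fin n × S → Fin n × S :=
  fun p => (N.up p.1 p.2 (N.next p.1 p.2), trans p.2 (N.next p.1 p.2))

/-- The unique play (sequence of state/action pairs) generated by the pure
finite-memory strategy obtained by fixing initial memory `m0`. -/
def playOf {n : ℕ} {S A : Type} (trans : S → A → S) (N : RDDMachine n S A)
    (m0 : Fin n) (s0 : S) (k : ℕ) : S × A :=
  (((confStep trans N)^[k] (m0, s0)).2,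
    N.next ((confStep trans N)^[k] (m0, s0)).1 ((confStep trans N)^[k] (m0, s0)).2)

/-- Probability, under the RDD machine's induced measure (the `init`-mixture of
Dirac measures on the plays of its pure strategies), of the cylinder of the
first `k` steps of the play `π`. -/
noncomputable def cylMeas {n : ℕ} {S A : Type} (trans : S → A → S)
    (N : RDDMachine n S A) (s0 : S) (π : ℕ → S × A) (k : ℕ) : ℝ :=
  ∑ m0 ∈ Finset.univ.filter (fun m0 : Fin n => ∀ i < k, playOf trans N m0 s0 i = π i),
    N.init m0

theorem rdd_aux (S A : Type) (trans : S → A → S) (n : ℕ) (N : RDDMachine n S A)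
    (h0 : ∀ m, 0 ≤ N.init m) (h1 : (∑ m, N.init m) = 1) (s0 : S) :
    ∃ (π : ℕ → S × A) (L : ℝ), 0 < L ∧
      Tendsto (cylMeas trans N s0 π) atTop (nhds L) := by
  have hex : ∃ m0 : Fin n, 0 < N.init m0 := by
    by_contra h
    push_neg at h
    have : (∑ m, N.init m) = 0 := Finset.sum_eq_zero fun m _ => le_antisymm (h m) (h0 m)
    rw [h1] at this; norm_num at this
  obtain ⟨m0, hm0⟩ := hex
  refine ⟨playOf trans N m0 s0, ?_⟩
  set f := cylMeas trans N s0 (playOf trans N m0 s0) with hf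
  have hanti : Antitone f := by
    intro j k hjk
    apply Finset.sum_le_sum_of_subset_of_nonneg
    · intro m hm
      simp only [Finset.mem_filter, Finset.mem_univ, true_and] at hm ⊢
      intro i hi; exact hm i (lt_of_lt_of_le hi hjk)
    · intro m _ _; exact h0 m
  have hlb : ∀ k, N.init m0 ≤ f k := by
    intro k
    have hmem : m0 ∈ Finset.univ.filter
        (fun m : Fin n => ∀ i < k, playOf trans N m s0 i = playOf trans N m0 s0 i) := by
      simp
    exact Finset.single_le_sum (fun m _ => h0 m) hmem
  have hbdd : BddBelow (Set.range f) := ⟨N.init m0, by rintro x ⟨k, rfl⟩; exact hlb k⟩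
  refine ⟨⨅ k, f k, ?_, tendsto_atTop_ciInf hanti hbdd⟩
  exact lt_of_lt_of_le hm0 (le_ciInf hlb)

/-- (i) In any game with deterministic transitions, the measure induced by an
RDD strategy assigns positive probability to at least one single play (the
probability of a singleton being the limit of the cylinder probabilities).
(ii) Hence no RDD strategy is outcome-equivalent to the uniform coin-flipping
strategy in the one-state two-action game, whose cylinders of depth `k` all
have probability `(1/2)^k`. -/
theorem rdd_has_positive_play_and_cannot_coinflip :
    (∀ (S A : Type) (trans : S → A → S) (n : ℕ) (N : RDDMachine n S A),
      (∀ m, 0 ≤ N.init m) → (∑ m, N.init m) = 1 → ∀ s0 : S,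
        ∃ (π : ℕ → S × A) (L : ℝ), 0 < L ∧
          Tendsto (cylMeas trans N s0 π) atTop (nhds L)) ∧
    ¬ ∃ (n : ℕ) (N : RDDMachine n Unit Bool),
        (∀ m, 0 ≤ N.init m) ∧ (∑ m, N.init m) = 1 ∧
        ∀ (π : ℕ → Unit × Bool) (k : ℕ),
          cylMeas (fun _ _ => ()) N () π k = (1 / 2 : ℝ) ^ k := by
  constructor
  · exact rdd_aux
  · rintro ⟨n, N, h0, h1, hcyl⟩
    obtain ⟨π, L, hL, hT⟩ := rdd_aux Unit Bool (fun _ _ => ()) n N h0 h1 ()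
    have h2 : Tendsto (cylMeas (fun _ _ => ()) N () π) atTop (nhds 0) := by
      have : (cylMeas (fun _ _ => ()) N () π) = fun k => (1 / 2 : ℝ) ^ k := by
        funext k; exact hcyl π k
      rw [this]
      exact tendsto_pow_atTop_nhds_zero_of_lt_one (by norm_num) (by norm_num)
    have := tendsto_nhds_unique hT h2
    exact absurd this (ne_of_gt hL)
end

section
/- For every RDD strategy (Mealy machine with randomised initialisation, deterministic outputs, deterministic updates) of Player 1 in a stochastic game, there exists an outcome-equivalent DRD strategy (Mealy machine with deterministic initialisation, randomised outputs, deterministic updates). Moreover, the constructed DRD machine has at most (|M|+1)^{|supp(μ_init)|} memory states, where M is the memory state set of the RDD machine. -/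
open scoped Classical

/-- A two-player stochastic game with state set `S` (partitioned by `P1`),
action set `A`, and probabilistic transition function `delta`. -/
structure Game (S A : Type) [Fintype S] [Fintype A] where
  P1 : S → Bool
  delta : S → A → S → ℝ
  delta_nonneg : ∀ s a s', 0 ≤ delta s a s'
  delta_sum : ∀ s a, ∑ s', delta s a s' = 1

variable {S A : Type} [Fintype S] [Fintype A]

/-- A (behavioural) strategy assigns to every word `w ∈ (S×A)*` and current
state a probability distribution over actions. -/
def IsStrategy (σ : List (S × A) → S → A → ℝ) : Prop :=
  (∀ w s a, 0 ≤ σ w s a) ∧ ∀ w s, ∑ a, σ w s a = 1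

/-- Probability of the cylinder of the history starting in `s0` and following
`steps`, under Player 1 strategy `σ1` and Player 2 strategy `σ2`. -/
def histProb (G : Game S A) (σ1 σ2 : List (S × A) → S → A → ℝ) (s0 : S)
    (steps : List (A × S)) : ℝ :=
  (steps.foldl
    (fun (acc : ℝ × S × List (S × A)) (p : A × S) =>
      (acc.1 * (if G.P1 acc.2.1 then σ1 acc.2.2 acc.2.1 p.1 else σ2 acc.2.2 acc.2.1 p.1)
          * G.delta acc.2.1 p.1 p.2,
        p.2, acc.2.2 ++ [(acc.2.1, p.1)]))
    ((1 : ℝ), s0, ([] : List (S × A)))).1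

/-- Two Player-1 strategies are outcome-equivalent if they induce the same
probability of every cylinder, against every Player-2 strategy and from every
initial state. -/
def OutcomeEquiv (G : Game S A) (σ τ : List (S × A) → S → A → ℝ) : Prop :=
  ∀ σ2, IsStrategy σ2 → ∀ s0 steps, histProb G σ σ2 s0 steps = histProb G τ σ2 s0 steps

/-- The steps form a genuine history: all transitions have positive probability. -/
def validHist (G : Game S A) : S → List (A × S) → Prop
  | _, [] => True
  | s, (a, s') :: rest => 0 < G.delta s a s' ∧ validHist G s' rest

/-- Consistency of a history with a Player-1 strategy: every action chosen at a
Player-1 state has positive probability. -/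
def consistentFrom (G : Game S A) (σ : List (S × A) → S → A → ℝ) :
    List (S × A) → S → List (A × S) → Prop
  | _, _, [] => True
  | w, s, (a, s') :: rest =>
      (G.P1 s = true → 0 < σ w s a) ∧ consistentFrom G σ (w ++ [(s, a)]) s' rest

/-- The word `w ∈ (S×A)*` and last state of the history `(s0, steps)`. -/
def histWord (s0 : S) (steps : List (A × S)) : List (S × A) × S :=
  steps.foldl (fun acc p => (acc.1 ++ [(acc.2, p.1)], p.2)) (([] : List (S × A)), s0)
/-- A stochastic Mealy machine with memory `Fin n`. -/
structure Mealy (n : ℕ) (S A : Type) where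
  init : Fin n → ℝ
  next : Fin n → S → A → ℝ
  up : Fin n → S → A → Fin n → ℝ

def ProperMealy {n : ℕ} (N : Mealy n S A) : Prop :=
  (∀ m, 0 ≤ N.init m) ∧ (∑ m, N.init m) = 1 ∧
  (∀ m s a, 0 ≤ N.next m s a) ∧ (∀ m s, ∑ a, N.next m s a = 1) ∧
  (∀ m s a m', 0 ≤ N.up m s a m') ∧ ∀ m s a, ∑ m', N.up m s a m' = 1

def IsDirac {α : Type} (μ : α → ℝ) : Prop := ∃ x, ∀ y, μ y = if y = x then 1 else 0

/-- Deterministic initialisation. -/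
def DetInit {n : ℕ} (N : Mealy n S A) : Prop := IsDirac N.init
/-- Deterministic outputs. -/
def DetNext {n : ℕ} (N : Mealy n S A) : Prop := ∀ m s, IsDirac (N.next m s)
/-- Deterministic updates. -/
def DetUp {n : ℕ} (N : Mealy n S A) : Prop := ∀ m s a, IsDirac (N.up m s a)

/-- One-step (Bayesian) update of the distribution over memory states upon
reading the pair `(s, a)`. -/
noncomputable def stepDist (G : Game S A) {n : ℕ} (N : Mealy n S A)
    (μ : Fin n → ℝ) (s : S) (a : A) : Fin n → ℝ :=
  if G.P1 s = true ∧ (∑ m', μ m' * N.next m' s a) ≠ 0 then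
    fun m => (∑ m', μ m' * N.up m' s a m * N.next m' s a) / (∑ m', μ m' * N.next m' s a)
  else fun m => ∑ m', μ m' * N.up m' s a m

/-- Distribution over memory states after the machine processes `w`. -/
noncomputable def memDist (G : Game S A) {n : ℕ} (N : Mealy n S A)
    (w : List (S × A)) : Fin n → ℝ :=
  w.foldl (fun μ p => stepDist G N μ p.1 p.2) N.init

/-- The strategy induced by a stochastic Mealy machine. -/
noncomputable def mealyStrat (G : Game S A) {n : ℕ} (N : Mealy n S A)
    (w : List (S × A)) (s : S) (a : A) : ℝ :=
  ∑ m, memDist G N w m * N.next m s a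

section RDDtoDRD
set_option linter.unusedSectionVars false

variable {S A : Type} [Fintype S] [Fintype A]

/-- The deterministic action of a machine with deterministic outputs. -/
noncomputable def dact {n : ℕ} (N : Mealy n S A) (hnext : DetNext N) (m : Fin n) (s : S) : A :=
  (hnext m s).choose

lemma dact_spec {n : ℕ} (N : Mealy n S A) (hnext : DetNext N) (m : Fin n) (s : S) (a : A) :
    N.next m s a = if a = dact N hnext m s then 1 else 0 := (hnext m s).choose_spec a

/-- The deterministic update of a machine with deterministic updates. -/
noncomputable def dupf {n : ℕ} (N : Mealy n S A) (hup : DetUp N) (m : Fin n) (s : S) (a : A) :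
    Fin n := (hup m s a).choose

lemma dupf_spec {n : ℕ} (N : Mealy n S A) (hup : DetUp N) (m : Fin n) (s : S) (a : A)
    (m' : Fin n) :
    N.up m s a m' = if m' = dupf N hup m s a then 1 else 0 := by
  have h := (hup m s a).choose_spec m'
  rw [h]
  congr

/-- Memory type of the new machine: for each initial memory state in the support,
either the current memory state, or `none` if it has become inconsistent. -/
abbrev TT {n : ℕ} (N : Mealy n S A) : Type := {m : Fin n // 0 < N.init m} → Option (Fin n)

/-- The deterministic transition of the new machine. -/
noncomputable def Fstep (G : Game S A) {n : ℕ} (N : Mealy n S A) (hnext : DetNext N)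
    (hup : DetUp N) (f : TT N) (s : S) (a : A) : TT N :=
  fun m0 => (f m0).bind fun m =>
    if G.P1 s = true ∧ ¬ a = dact N hnext m s then none else some (dupf N hup m s a)

/-- The initial memory state of the new machine. -/
def finit {n : ℕ} (N : Mealy n S A) : TT N := fun m0 => some m0.val

/-- Memory state of the new machine after reading `w`. -/
noncomputable def Tmem (G : Game S A) {n : ℕ} (N : Mealy n S A) (hnext : DetNext N)
    (hup : DetUp N) (w : List (S × A)) : TT N :=
  w.foldl (fun f p => Fstep G N hnext hup f p.1 p.2) (finit N)

/-- Unnormalised posterior weight of memory state `m` of `N`. -/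
noncomputable def nuf {n : ℕ} (N : Mealy n S A) (f : TT N) (m : Fin n) : ℝ :=
  ∑ m0 : {m : Fin n // 0 < N.init m}, if f m0 = some m then N.init m0.val else 0

/-- Total posterior weight. -/
noncomputable def Wt {n : ℕ} (N : Mealy n S A) (f : TT N) : ℝ :=
  ∑ m0 : {m : Fin n // 0 < N.init m}, if (f m0).isSome then N.init m0.val else 0

lemma nuf_nonneg {n : ℕ} (N : Mealy n S A) (hN : ProperMealy N) (f : TT N) (m : Fin n) :
    0 ≤ nuf N f m := by
  refine Finset.sum_nonneg fun m0 _ => ?_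
  split_ifs <;> [exact hN.1 _; exact le_refl 0]

lemma Wt_nonneg {n : ℕ} (N : Mealy n S A) (hN : ProperMealy N) (f : TT N) :
    0 ≤ Wt N f := by
  refine Finset.sum_nonneg fun m0 _ => ?_
  split_ifs <;> [exact hN.1 _; exact le_refl 0]

lemma sum_nuf {n : ℕ} (N : Mealy n S A) (f : TT N) : ∑ m, nuf N f m = Wt N f := by
  unfold nuf Wt
  rw [Finset.sum_comm]
  refine Finset.sum_congr rfl fun m0 _ => ?_
  cases h : f m0 <;> simp [h, Finset.sum_ite_eq]

lemma nuf_finit {n : ℕ} (N : Mealy n S A) (hN : ProperMealy N) (m : Fin n) :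
    nuf N (finit N) m = N.init m := by
  unfold nuf finit
  by_cases hm : 0 < N.init m
  · rw [Finset.sum_eq_single (⟨m, hm⟩ : {m : Fin n // 0 < N.init m})]
    · simp
    · intro b _ hb
      simp only [Option.some.injEq]
      rw [if_neg]
      intro hbm
      exact hb (Subtype.ext hbm)
    · simp
  · have : N.init m = 0 := le_antisymm (not_lt.mp hm) (hN.1 m)
    rw [this]
    refine Finset.sum_eq_zero fun m0 _ => ?_
    simp only [Option.some.injEq]
    rw [if_neg]
    intro h
    exact hm (h ▸ m0.2)

lemma Wt_finit {n : ℕ} (N : Mealy n S A) (hN : ProperMealy N) : Wt N (finit N) = 1 := by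
  rw [← sum_nuf]
  have : ∀ m, nuf N (finit N) m = N.init m := nuf_finit N hN
  simp only [this]
  exact hN.2.1

lemma nuf_step (G : Game S A) {n : ℕ} (N : Mealy n S A) (hnext : DetNext N) (hup : DetUp N)
    (f : TT N) (s : S) (a : A) (m : Fin n) :
    nuf N (Fstep G N hnext hup f s a) m =
      ∑ m', if (G.P1 s = true → a = dact N hnext m' s) ∧ m = dupf N hup m' s a
        then nuf N f m' else 0 := by
  unfold nuf
  have : ∀ m', (if (G.P1 s = true → a = dact N hnext m' s) ∧ m = dupf N hup m' s a
      then (∑ m0 : {m : Fin n // 0 < N.init m}, if f m0 = some m' then N.init m0.val else 0)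
      else 0)
      = ∑ m0 : {m : Fin n // 0 < N.init m},
          if ((G.P1 s = true → a = dact N hnext m' s) ∧ m = dupf N hup m' s a) ∧ f m0 = some m'
            then N.init m0.val else 0 := by
    intro m'
    by_cases h : (G.P1 s = true → a = dact N hnext m' s) ∧ m = dupf N hup m' s a
    · rw [if_pos h]
      refine Finset.sum_congr rfl fun m0 _ => ?_
      by_cases hf : f m0 = some m'
      · rw [if_pos hf, if_pos ⟨h, hf⟩]
      · rw [if_neg hf, if_neg fun hc => hf hc.2]
    · rw [if_neg h]
      exact (Finset.sum_eq_zero fun m0 _ => if_neg fun hc => h hc.1).symm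
  simp only [this]
  rw [Finset.sum_comm]
  refine Finset.sum_congr rfl fun m0 _ => ?_
  cases hf : f m0 with
  | none => simp [Fstep, hf]
  | some x =>
      have hF : Fstep G N hnext hup f s a m0 =
          if G.P1 s = true ∧ ¬ a = dact N hnext x s then none else some (dupf N hup x s a) := by
        simp [Fstep, hf]
      rw [Finset.sum_eq_single x]
      · rw [hF]
        by_cases h1 : G.P1 s = true ∧ ¬ a = dact N hnext x s
        · rw [if_pos h1, if_neg (by simp), if_neg]
          intro hc
          exact h1.2 (hc.1.1 h1.1)
        · rw [if_neg h1]
          by_cases h2 : m = dupf N hup x s a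
          · rw [if_pos (by rw [h2]), if_pos]
            exact ⟨⟨fun hp => by_contra fun hc => h1 ⟨hp, hc⟩, h2⟩, rfl⟩
          · rw [if_neg, if_neg]
            · intro hc
              exact h2 hc.1.2
            · intro hc
              exact h2 (Option.some_injective _ hc).symm
      · intro b _ hb
        rw [if_neg]
        intro hc
        exact hb (Option.some_injective _ (hf ▸ hc.2)).symm
      · simp
  
lemma Wt_step (G : Game S A) {n : ℕ} (N : Mealy n S A) (hnext : DetNext N) (hup : DetUp N)
    (f : TT N) (s : S) (a : A) :
    Wt N (Fstep G N hnext hup f s a) =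
      ∑ m', if (G.P1 s = true → a = dact N hnext m' s) then nuf N f m' else 0 := by
  rw [← sum_nuf]
  simp only [nuf_step G N hnext hup f s a]
  rw [Finset.sum_comm]
  refine Finset.sum_congr rfl fun m' _ => ?_
  by_cases h : G.P1 s = true → a = dact N hnext m' s
  · rw [if_pos h, Finset.sum_eq_single (dupf N hup m' s a)]
    · rw [if_pos ⟨h, rfl⟩]
    · intro b _ hb
      exact if_neg fun hc => hb hc.2
    · simp
  · rw [if_neg h]
    exact Finset.sum_eq_zero fun m0 _ => if_neg fun hc => h hc.1

/-- Output distribution of the new machine. -/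
noncomputable def bnext {n : ℕ} (N : Mealy n S A) (d : Fin n) (f : TT N) (s : S) (a : A) : ℝ :=
  if Wt N f = 0 then N.next d s a
  else (∑ m0 : {m : Fin n // 0 < N.init m},
      ((f m0).elim 0 fun m => N.init m0.val * N.next m s a)) / Wt N f

lemma bnext_eq {n : ℕ} (N : Mealy n S A) (d : Fin n) (f : TT N) (s : S) (a : A)
    (hW : Wt N f ≠ 0) :
    bnext N d f s a = (∑ m, nuf N f m * N.next m s a) / Wt N f := by
  unfold bnext
  rw [if_neg hW]
  congr 1
  unfold nuf
  simp only [Finset.sum_mul]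
  rw [Finset.sum_comm]
  refine Finset.sum_congr rfl fun m0 _ => ?_
  cases h : f m0 <;> simp [h, ite_mul, Finset.sum_ite_eq]

/-- The new machine. -/
noncomputable def Bmach (G : Game S A) {n : ℕ} (N : Mealy n S A) (hnext : DetNext N)
    (hup : DetUp N) (d : Fin n) : Mealy (Fintype.card (TT N)) S A where
  init i := if i = Fintype.equivFin (TT N) (finit N) then 1 else 0
  next i s a := bnext N d ((Fintype.equivFin (TT N)).symm i) s a
  up i s a j :=
    if j = Fintype.equivFin (TT N) (Fstep G N hnext hup ((Fintype.equivFin (TT N)).symm i) s a)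
      then 1 else 0

lemma bnext_nonneg {n : ℕ} (N : Mealy n S A) (hN : ProperMealy N) (d : Fin n) (f : TT N)
    (s : S) (a : A) : 0 ≤ bnext N d f s a := by
  unfold bnext
  split_ifs with h
  · exact hN.2.2.1 _ _ _
  · refine div_nonneg (Finset.sum_nonneg fun m0 _ => ?_) (Wt_nonneg N hN f)
    cases hf : f m0 with
    | none => simp
    | some x =>
        simp only [Option.elim_some]
        exact mul_nonneg (le_of_lt m0.2) (hN.2.2.1 _ _ _)

lemma bnext_sum {n : ℕ} (N : Mealy n S A) (hN : ProperMealy N) (d : Fin n) (f : TT N) (s : S) :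
    ∑ a, bnext N d f s a = 1 := by
  unfold bnext
  by_cases h : Wt N f = 0
  · simp only [if_pos h]
    exact hN.2.2.2.1 d s
  · simp only [if_neg h]
    rw [← Finset.sum_div, div_eq_one_iff_eq h, Finset.sum_comm]
    unfold Wt
    refine Finset.sum_congr rfl fun m0 _ => ?_
    cases hf : f m0 with
    | none => simp
    | some x =>
        simp only [Option.elim_some, Option.isSome_some, if_true]
        rw [← Finset.mul_sum, hN.2.2.2.1 x s, mul_one]

lemma Bmach_proper (G : Game S A) {n : ℕ} (N : Mealy n S A) (hN : ProperMealy N)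
    (hnext : DetNext N) (hup : DetUp N) (d : Fin n) :
    ProperMealy (Bmach G N hnext hup d) := by
  refine ⟨?_, ?_, ?_, ?_, ?_, ?_⟩
  · intro m
    show (0:ℝ) ≤ if m = Fintype.equivFin (TT N) (finit N) then 1 else 0
    split_ifs <;> norm_num
  · show (∑ i, if i = Fintype.equivFin (TT N) (finit N) then (1:ℝ) else 0) = 1
    simp [Finset.sum_ite_eq']
  · intro m s a
    exact bnext_nonneg N hN d _ s a
  · intro m s
    exact bnext_sum N hN d _ s
  · intro m s a m'
    show (0:ℝ) ≤ if m' = _ then 1 else 0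
    split_ifs <;> norm_num
  · intro m s a
    show (∑ j, if j = Fintype.equivFin (TT N) (Fstep G N hnext hup _ s a) then (1:ℝ) else 0) = 1
    simp [Finset.sum_ite_eq']

lemma stepDist_pos (G : Game S A) {n : ℕ} (N : Mealy n S A) (μ : Fin n → ℝ) (s : S) (a : A)
    (h : G.P1 s = true ∧ (∑ m', μ m' * N.next m' s a) ≠ 0) (m : Fin n) :
    stepDist G N μ s a m
      = (∑ m', μ m' * N.up m' s a m * N.next m' s a) / (∑ m', μ m' * N.next m' s a) := by
  unfold stepDist
  rw [if_pos h]

lemma stepDist_neg (G : Game S A) {n : ℕ} (N : Mealy n S A) (μ : Fin n → ℝ) (s : S) (a : A)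
    (h : ¬(G.P1 s = true ∧ (∑ m', μ m' * N.next m' s a) ≠ 0)) (m : Fin n) :
    stepDist G N μ s a m = ∑ m', μ m' * N.up m' s a m := by
  unfold stepDist
  rw [if_neg h]

lemma stepB_dirac (G : Game S A) {n : ℕ} (N : Mealy n S A) (hnext : DetNext N) (hup : DetUp N)
    (d : Fin n) (x : Fin (Fintype.card (TT N))) (s : S) (a : A) :
    stepDist G (Bmach G N hnext hup d) (fun j => if j = x then 1 else 0) s a
      = (Bmach G N hnext hup d).up x s a := by
  funext m
  unfold stepDist
  split_ifs with h
  · simp only [ite_mul, one_mul, zero_mul, Finset.sum_ite_eq', Finset.mem_univ, if_true] at h ⊢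
    rw [mul_div_assoc, div_self h.2, mul_one]
  · simp only [ite_mul, one_mul, zero_mul, Finset.sum_ite_eq', Finset.mem_univ, if_true]

lemma memDistB (G : Game S A) {n : ℕ} (N : Mealy n S A) (hnext : DetNext N) (hup : DetUp N)
    (d : Fin n) (w : List (S × A)) :
    memDist G (Bmach G N hnext hup d) w
      = fun j => if j = Fintype.equivFin (TT N) (Tmem G N hnext hup w) then 1 else 0 := by
  suffices h : ∀ (w : List (S × A)) (f : TT N),
      List.foldl (fun μ p => stepDist G (Bmach G N hnext hup d) μ p.1 p.2)
        (fun j => if j = Fintype.equivFin (TT N) f then 1 else 0) w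
      = fun j => if j = Fintype.equivFin (TT N)
          (List.foldl (fun f p => Fstep G N hnext hup f p.1 p.2) f w) then 1 else 0 by
    have h0 : (Bmach G N hnext hup d).init
        = fun j => if j = Fintype.equivFin (TT N) (finit N) then 1 else 0 := rfl
    unfold memDist Tmem
    rw [h0]
    exact h w (finit N)
  intro w
  induction w with
  | nil => intro f; rfl
  | cons p rest ih =>
      intro f
      rw [List.foldl_cons, List.foldl_cons, stepB_dirac G N hnext hup d]
      have hupx : (Bmach G N hnext hup d).up (Fintype.equivFin (TT N) f) p.1 p.2
          = fun j => if j = Fintype.equivFin (TT N) (Fstep G N hnext hup f p.1 p.2)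
              then 1 else 0 := by
        funext j
        show (if j = Fintype.equivFin (TT N) (Fstep G N hnext hup
            ((Fintype.equivFin (TT N)).symm (Fintype.equivFin (TT N) f)) p.1 p.2)
          then (1:ℝ) else 0) = _
        rw [Equiv.symm_apply_apply]
      rw [hupx]
      exact ih (Fstep G N hnext hup f p.1 p.2)

lemma stratB (G : Game S A) {n : ℕ} (N : Mealy n S A) (hnext : DetNext N) (hup : DetUp N)
    (d : Fin n) (w : List (S × A)) (s : S) (a : A) :
    mealyStrat G (Bmach G N hnext hup d) w s a = bnext N d (Tmem G N hnext hup w) s a := by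
  unfold mealyStrat
  rw [memDistB G N hnext hup d]
  simp only [ite_mul, one_mul, zero_mul, Finset.sum_ite_eq', Finset.mem_univ, if_true]
  show bnext N d ((Fintype.equivFin (TT N)).symm (Fintype.equivFin (TT N) _)) s a = _
  rw [Equiv.symm_apply_apply]

lemma stratN (G : Game S A) {n : ℕ} (N : Mealy n S A) (hnext : DetNext N) (hup : DetUp N)
    (w : List (S × A)) (s : S) (a : A)
    (hμ : ∀ m, memDist G N w m
      = nuf N (Tmem G N hnext hup w) m / Wt N (Tmem G N hnext hup w)) :
    mealyStrat G N w s a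
      = (∑ m, nuf N (Tmem G N hnext hup w) m * N.next m s a) / Wt N (Tmem G N hnext hup w) := by
  unfold mealyStrat
  rw [Finset.sum_div]
  refine Finset.sum_congr rfl fun m _ => ?_
  rw [hμ m, div_mul_eq_mul_div]

/-- The invariant: the posterior over `N`'s memory is the normalised `nuf`. -/
def InvW (G : Game S A) {n : ℕ} (N : Mealy n S A) (hnext : DetNext N) (hup : DetUp N)
    (w : List (S × A)) : Prop :=
  (∀ m, memDist G N w m
      = nuf N (Tmem G N hnext hup w) m / Wt N (Tmem G N hnext hup w)) ∧
    Wt N (Tmem G N hnext hup w) ≠ 0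

lemma strat_agree (G : Game S A) {n : ℕ} (N : Mealy n S A) (hnext : DetNext N) (hup : DetUp N)
    (d : Fin n) (w : List (S × A)) (hI : InvW G N hnext hup w) (s : S) (a : A) :
    mealyStrat G N w s a = mealyStrat G (Bmach G N hnext hup d) w s a := by
  rw [stratN G N hnext hup w s a hI.1, stratB G N hnext hup d w s a,
    bnext_eq N d _ s a hI.2]

lemma Inv_nil (G : Game S A) {n : ℕ} (N : Mealy n S A) (hN : ProperMealy N)
    (hnext : DetNext N) (hup : DetUp N) : InvW G N hnext hup [] := by
  have ht : Tmem G N hnext hup [] = finit N := rfl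
  constructor
  · intro m
    rw [ht, nuf_finit N hN m, Wt_finit N hN, div_one]
    rfl
  · rw [ht, Wt_finit N hN]
    exact one_ne_zero

lemma Inv_step (G : Game S A) {n : ℕ} (N : Mealy n S A) (hN : ProperMealy N)
    (hnext : DetNext N) (hup : DetUp N) (w : List (S × A)) (s : S) (a : A)
    (hI : InvW G N hnext hup w)
    (hgood : G.P1 s = true → mealyStrat G N w s a ≠ 0) :
    InvW G N hnext hup (w ++ [(s, a)]) := by
  obtain ⟨hμ, hW⟩ := hI
  set f := Tmem G N hnext hup w with hf
  have hT : Tmem G N hnext hup (w ++ [(s, a)]) = Fstep G N hnext hup f s a := by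
    rw [hf]
    unfold Tmem
    rw [List.foldl_append]
    rfl
  have hM : memDist G N (w ++ [(s, a)]) = stepDist G N (memDist G N w) s a := by
    unfold memDist
    rw [List.foldl_append]
    rfl
  have hms : (∑ m', memDist G N w m' * N.next m' s a) = mealyStrat G N w s a := rfl
  have hDN : mealyStrat G N w s a
      = (∑ m', if a = dact N hnext m' s then nuf N f m' else 0) / Wt N f := by
    unfold mealyStrat
    rw [Finset.sum_div]
    refine Finset.sum_congr rfl fun m _ => ?_
    rw [hμ m, dact_spec N hnext m s a]
    split_ifs with h
    · rw [mul_one]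
    · rw [mul_zero, zero_div]
  have hdd : ∀ x y z : ℝ, z ≠ 0 → x / z / (y / z) = x / y := by
    intro x y z hz
    rw [div_div_eq_mul_div, div_mul_cancel₀ _ hz]
  by_cases hP : G.P1 s = true
  · have hσ := hgood hP
    have hDN0 : (∑ m', if a = dact N hnext m' s then nuf N f m' else 0) ≠ 0 := by
      intro h0
      exact hσ (by rw [hDN, h0, zero_div])
    have hW' : Wt N (Fstep G N hnext hup f s a)
        = ∑ m', if a = dact N hnext m' s then nuf N f m' else 0 := by
      rw [Wt_step]
      refine Finset.sum_congr rfl fun m' _ => ?_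
      simp [hP]
    constructor
    · intro m
      rw [hT, hM, hW',
        stepDist_pos G N (memDist G N w) s a ⟨hP, by rw [hms]; exact hσ⟩ m, hms, hDN]
      have hnum : (∑ m', memDist G N w m' * N.up m' s a m * N.next m' s a)
          = (∑ m', if a = dact N hnext m' s ∧ m = dupf N hup m' s a
              then nuf N f m' else 0) / Wt N f := by
        rw [Finset.sum_div]
        refine Finset.sum_congr rfl fun m' _ => ?_
        rw [hμ m', dupf_spec N hup m' s a m, dact_spec N hnext m' s a]
        by_cases h1 : a = dact N hnext m' s <;> by_cases h2 : m = dupf N hup m' s a <;>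
          simp [h1, h2, ite_div, zero_div]
      have hnu : nuf N (Fstep G N hnext hup f s a) m
          = ∑ m', if a = dact N hnext m' s ∧ m = dupf N hup m' s a then nuf N f m' else 0 := by
        rw [nuf_step]
        refine Finset.sum_congr rfl fun m' _ => ?_
        simp [hP]
      rw [hnum, hnu, hdd _ _ _ hW]
    · rw [hT, hW']
      exact hDN0
  · have hW' : Wt N (Fstep G N hnext hup f s a) = Wt N f := by
      rw [Wt_step, ← sum_nuf]
      refine Finset.sum_congr rfl fun m' _ => ?_
      rw [if_pos (fun hc => absurd hc hP)]
    constructor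
    · intro m
      rw [hT, hM, hW', stepDist_neg G N (memDist G N w) s a (fun hc => hP hc.1) m]
      have hnu : nuf N (Fstep G N hnext hup f s a) m
          = ∑ m', if m = dupf N hup m' s a then nuf N f m' else 0 := by
        rw [nuf_step]
        refine Finset.sum_congr rfl fun m' _ => ?_
        by_cases h2 : m = dupf N hup m' s a <;> simp [h2, hP]
      rw [hnu, Finset.sum_div]
      refine Finset.sum_congr rfl fun m' _ => ?_
      rw [hμ m', dupf_spec N hup m' s a m]
      split_ifs with h2
      · rw [mul_one]
      · rw [mul_zero, zero_div]
    · rw [hT, hW']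
      exact hW

lemma fold_zero (G : Game S A) (σ1 σ2 : List (S × A) → S → A → ℝ) :
    ∀ (steps : List (A × S)) (s : S) (w : List (S × A)),
      (steps.foldl (fun (acc : ℝ × S × List (S × A)) (p : A × S) =>
        (acc.1 * (if G.P1 acc.2.1 then σ1 acc.2.2 acc.2.1 p.1 else σ2 acc.2.2 acc.2.1 p.1)
            * G.delta acc.2.1 p.1 p.2, p.2, acc.2.2 ++ [(acc.2.1, p.1)]))
        ((0:ℝ), s, w)).1 = 0 := by
  intro steps
  induction steps with
  | nil => intro s w; rfl
  | cons p rest ih =>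
      intro s w
      rw [List.foldl_cons]
      dsimp only
      rw [zero_mul, zero_mul]
      exact ih p.2 (w ++ [(s, p.1)])

lemma fold_eq (G : Game S A) {n : ℕ} (N : Mealy n S A) (hN : ProperMealy N)
    (hnext : DetNext N) (hup : DetUp N) (d : Fin n) (σ2 : List (S × A) → S → A → ℝ) :
    ∀ (steps : List (A × S)) (c : ℝ) (s : S) (w : List (S × A)),
      (c = 0 ∨ InvW G N hnext hup w) →
      (steps.foldl (fun (acc : ℝ × S × List (S × A)) (p : A × S) =>
          (acc.1 * (if G.P1 acc.2.1 then mealyStrat G N acc.2.2 acc.2.1 p.1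
              else σ2 acc.2.2 acc.2.1 p.1) * G.delta acc.2.1 p.1 p.2,
            p.2, acc.2.2 ++ [(acc.2.1, p.1)])) (c, s, w)).1
      = (steps.foldl (fun (acc : ℝ × S × List (S × A)) (p : A × S) =>
          (acc.1 * (if G.P1 acc.2.1 then mealyStrat G (Bmach G N hnext hup d) acc.2.2 acc.2.1 p.1
              else σ2 acc.2.2 acc.2.1 p.1) * G.delta acc.2.1 p.1 p.2,
            p.2, acc.2.2 ++ [(acc.2.1, p.1)])) (c, s, w)).1 := by
  intro steps
  induction steps with
  | nil => intro c s w _; rfl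
  | cons p rest ih =>
      intro c s w h
      rw [List.foldl_cons, List.foldl_cons]
      dsimp only
      rcases h with hc | hI
      · subst hc
        rw [zero_mul, zero_mul, zero_mul, zero_mul]
        rw [fold_zero G (mealyStrat G N) σ2,
          fold_zero G (mealyStrat G (Bmach G N hnext hup d)) σ2]
      · have hφ : (if G.P1 s then mealyStrat G N w s p.1 else σ2 w s p.1)
            = (if G.P1 s then mealyStrat G (Bmach G N hnext hup d) w s p.1
                else σ2 w s p.1) := by
          by_cases hP : G.P1 s
          · rw [if_pos hP, if_pos hP, strat_agree G N hnext hup d w hI]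
          · rw [if_neg hP, if_neg hP]
        rw [hφ]
        apply ih
        by_cases hz : c * (if G.P1 s then mealyStrat G (Bmach G N hnext hup d) w s p.1
            else σ2 w s p.1) * G.delta s p.1 p.2 = 0
        · exact Or.inl hz
        · refine Or.inr (Inv_step G N hN hnext hup w s p.1 hI ?_)
          intro hP h0
          apply hz
          rw [← hφ, if_pos hP, h0, mul_zero, zero_mul]


end RDDtoDRD

/-- Every RDD strategy (randomised initialisation, deterministic outputs and
updates) admits an outcome-equivalent DRD strategy (deterministic
initialisation and updates, randomised outputs), with at most
`(|M|+1)^|supp(μ_init)|` memory states. -/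
theorem rdd_subset_drd (S A : Type) [Fintype S] [Fintype A]
    (G : Game S A) (n : ℕ) (N : Mealy n S A) (hN : ProperMealy N)
    (hnext : DetNext N) (hup : DetUp N) :
    ∃ (k : ℕ) (B : Mealy k S A), ProperMealy B ∧ DetInit B ∧ DetUp B ∧
      OutcomeEquiv G (mealyStrat G N) (mealyStrat G B) ∧
      k ≤ (n + 1) ^ (Finset.univ.filter fun m => 0 < N.init m).card := by
  classical
  have hn : 0 < n := by
    rcases Nat.eq_zero_or_pos n with h | h
    · exfalso
      have h1 := hN.2.1
      subst h
      simp at h1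
    · exact h
  set d : Fin n := ⟨0, hn⟩
  refine ⟨Fintype.card (TT N), Bmach G N hnext hup d,
    Bmach_proper G N hN hnext hup d, ?_, ?_, ?_, ?_⟩
  · refine ⟨Fintype.equivFin (TT N) (finit N), fun y => ?_⟩
    simp only [Bmach]
    split_ifs <;> rfl
  · intro m s a
    refine ⟨Fintype.equivFin (TT N) (Fstep G N hnext hup ((Fintype.equivFin (TT N)).symm m) s a),
      fun y => ?_⟩
    simp only [Bmach]
    split_ifs <;> rfl
  · intro σ2 _ s0 steps
    unfold histProb
    exact fold_eq G N hN hnext hup d σ2 steps 1 s0 [] (Or.inr (Inv_nil G N hN hnext hup))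
  · apply le_of_eq
    have h1 : Fintype.card (TT N)
        = Fintype.card (Option (Fin n)) ^ Fintype.card {m : Fin n // 0 < N.init m} :=
      Fintype.card_fun
    rw [Fintype.card_option, Fintype.card_fin] at h1
    rw [h1, Fintype.card_subtype]
end

section
/- For every n ≥ 1 there is a deterministic two-player game G_n with n+2 states and an RDD strategy M_n of Player 1 with n memory states such that every DRD strategy outcome-equivalent to M_n has at least 2^n − 1 memory states. -/
open scoped Classical

variable {S A : Type} [Fintype S] [Fintype A]

namespace RDDProof

/-- Recursive version of `histProb`, tracking the accumulated word. -/
def hp (G : Game S A) (σ1 σ2 : List (S × A) → S → A → ℝ) :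
    List (S × A) → S → List (A × S) → ℝ
  | _, _, [] => 1
  | w, s, (a, s') :: rest =>
      (if G.P1 s then σ1 w s a else σ2 w s a) * G.delta s a s' *
        hp G σ1 σ2 (w ++ [(s, a)]) s' rest

lemma foldl_fst (G : Game S A) (σ1 σ2 : List (S × A) → S → A → ℝ)
    (steps : List (A × S)) :
    ∀ (c : ℝ) (s : S) (w : List (S × A)),
      (steps.foldl
        (fun (acc : ℝ × S × List (S × A)) (p : A × S) =>
          (acc.1 * (if G.P1 acc.2.1 then σ1 acc.2.2 acc.2.1 p.1 else σ2 acc.2.2 acc.2.1 p.1)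
              * G.delta acc.2.1 p.1 p.2,
            p.2, acc.2.2 ++ [(acc.2.1, p.1)])) (c, s, w)).1 = c * hp G σ1 σ2 w s steps := by
  induction steps with
  | nil => intro c s w; simp [hp]
  | cons p rest ih =>
      intro c s w
      obtain ⟨a, s'⟩ := p
      simp only [List.foldl_cons, hp, ih]
      ring

lemma histProb_eq_hp (G : Game S A) (σ1 σ2 : List (S × A) → S → A → ℝ)
    (s0 : S) (steps : List (A × S)) :
    histProb G σ1 σ2 s0 steps = hp G σ1 σ2 [] s0 steps := by
  have := foldl_fst G σ1 σ2 steps 1 s0 []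
  simpa [histProb] using this

/-- Word and final state of a history, tracking an accumulated word. -/
def hw : List (S × A) → S → List (A × S) → List (S × A) × S
  | w, s, [] => (w, s)
  | w, s, (a, s') :: rest => hw (w ++ [(s, a)]) s' rest

lemma hp_append (G : Game S A) (σ1 σ2 : List (S × A) → S → A → ℝ) :
    ∀ (steps : List (A × S)) (w : List (S × A)) (s : S) (a : A) (s' : S),
      hp G σ1 σ2 w s (steps ++ [(a, s')]) =
        hp G σ1 σ2 w s steps *
          ((if G.P1 (hw w s steps).2 then σ1 (hw w s steps).1 (hw w s steps).2 a
            else σ2 (hw w s steps).1 (hw w s steps).2 a) * G.delta (hw w s steps).2 a s') := by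
  intro steps
  induction steps with
  | nil => intro w s a s'; simp only [List.nil_append, hp, mul_one, one_mul]; rfl
  | cons p rest ih =>
      intro w s a s'
      obtain ⟨b, t⟩ := p
      simp only [List.cons_append, hp, List.append_eq]
      rw [ih, show hw w s ((b, t) :: rest) = hw (w ++ [(s, b)]) t rest from rfl]
      ring

section Construction

variable (n : ℕ)

def sOf (i : Fin n) : Fin (n + 2) := ⟨i.1, by omega⟩
def sstar : Fin (n + 2) := ⟨n, by omega⟩
def tst : Fin (n + 2) := ⟨n + 1, by omega⟩
def aOf (i : Fin n) : Fin (n + 1) := ⟨i.1, by omega⟩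
def bact : Fin (n + 1) := ⟨n, by omega⟩

/-- Deterministic transition function of the game. -/
def nxt (s : Fin (n + 2)) (a : Fin (n + 1)) : Fin (n + 2) :=
  if s.1 < n then tst n
  else if s.1 = n then sstar n
  else if h : a.1 < n then sOf n ⟨a.1, h⟩ else sstar n

def Gme : Game (Fin (n + 2)) (Fin (n + 1)) where
  P1 s := decide (s.1 ≤ n)
  delta s a s' := if s' = nxt n s a then 1 else 0
  delta_nonneg := by
    intro s a s'
    split <;> norm_num
  delta_sum := by
    intro s a
    simp

/-- The deterministic output of memory state `m` of the RDD machine. -/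
def nactA (m : Fin n) (s : Fin (n + 2)) : Fin (n + 1) :=
  if s.1 = m.1 ∨ s.1 = n then aOf n m else bact n

/-- The RDD machine: uniform initialisation, deterministic outputs,
identity (deterministic) updates. -/
noncomputable def NN : Mealy n (Fin (n + 2)) (Fin (n + 1)) where
  init _ := (n : ℝ)⁻¹
  next m s a := if a = nactA n m s then 1 else 0
  up m _ _ m' := if m' = m then 1 else 0

lemma properNN (hn : 1 ≤ n) : ProperMealy (NN n) := by
  refine ⟨?_, ?_, ?_, ?_, ?_, ?_⟩
  · intro m; simp [NN]
  · simp only [NN, Finset.sum_const, Finset.card_univ, Fintype.card_fin, nsmul_eq_mul]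
    exact mul_inv_cancel₀ (Nat.cast_ne_zero.mpr (by omega))
  · intro m s a; simp only [NN]; split <;> norm_num
  · intro m s; simp [NN]
  · intro m s a m'; simp only [NN]; split <;> norm_num
  · intro m s a; simp [NN]

lemma detNextNN : DetNext (NN n) := fun m s => ⟨nactA n m s, fun a => by simp [NN]⟩

lemma detUpNN : DetUp (NN n) := fun m _ _ => ⟨m, fun m' => by simp [NN]⟩

lemma P1_t : (Gme n).P1 (tst n) = false := by
  simp only [Gme, tst, decide_eq_false_iff_not]; omega

lemma P1_s (i : Fin n) : (Gme n).P1 (sOf n i) = true := by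
  simp only [Gme, sOf, decide_eq_true_eq]; omega

lemma P1_star : (Gme n).P1 (sstar n) = true := by
  simp only [Gme, sstar, decide_eq_true_eq]
  omega

lemma sOf_val (i : Fin n) : (sOf n i).1 = i.1 := rfl
lemma aOf_val (i : Fin n) : (aOf n i).1 = i.1 := rfl
lemma bact_val : (bact n).1 = n := rfl
lemma sstar_val : (sstar n).1 = n := rfl
lemma tst_val : (tst n).1 = n + 1 := rfl

lemma nxt_t_a (i : Fin n) : nxt n (tst n) (aOf n i) = sOf n i := by
  have hi := i.2
  unfold nxt; rw [tst_val]
  rw [if_neg (by omega), if_neg (by omega), dif_pos (by exact i.2)]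
  rfl

lemma nxt_t_b : nxt n (tst n) (bact n) = sstar n := by
  unfold nxt; rw [tst_val, bact_val]
  rw [if_neg (by omega), if_neg (by omega), dif_neg (by omega)]

lemma nxt_s (i : Fin n) (a : Fin (n + 1)) : nxt n (sOf n i) a = tst n := by
  have hi := i.2
  unfold nxt; rw [sOf_val]
  rw [if_pos (by omega)]

lemma nxt_star (a : Fin (n + 1)) : nxt n (sstar n) a = sstar n := by
  simp [nxt, sstar_val]

lemma delta_eq_one {s s' : Fin (n + 2)} {a : Fin (n + 1)} (h : nxt n s a = s') :
    (Gme n).delta s a s' = 1 := by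
  simp [Gme, h.symm]

lemma nactA_s (m i : Fin n) : nactA n m (sOf n i) = if i = m then aOf n m else bact n := by
  unfold nactA; rw [sOf_val]
  by_cases h : i = m
  · rw [if_pos (Or.inl (congrArg Fin.val h)), if_pos h]
  · have hi := i.2
    rw [if_neg ?_, if_neg h]
    push_neg
    exact ⟨fun hc => h (Fin.ext hc), by omega⟩

lemma nextNN_s (m i : Fin n) : (NN n).next m (sOf n i) (bact n) = if m = i then 0 else 1 := by
  have hm := m.2
  simp only [NN, nactA_s]
  by_cases h : i = m
  · rw [if_pos h, if_pos h.symm, if_neg]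
    intro hc
    have := congrArg Fin.val hc
    simp only [bact_val, aOf_val] at this
    omega
  · rw [if_neg h, if_pos rfl, if_neg (fun hc => h hc.symm)]

lemma nextNN_star (m : Fin n) (a : Fin (n + 1)) :
    (NN n).next m (sstar n) a = if a = aOf n m then 1 else 0 := by
  simp only [NN, nactA, sstar_val, eq_self_iff_true, or_true, if_true]

/-- Uniform distribution on a finset of memory states. -/
noncomputable def unif (T : Finset (Fin n)) : Fin n → ℝ :=
  fun m => if m ∈ T then (T.card : ℝ)⁻¹ else 0

lemma sum_up_NN (μ : Fin n → ℝ) (s : Fin (n + 2)) (a : Fin (n + 1)) (m : Fin n) :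
    ∑ m', μ m' * (NN n).up m' s a m = μ m := by
  rw [Finset.sum_eq_single m]
  · simp [NN]
  · intro b _ hb
    simp only [NN]
    rw [if_neg (Ne.symm hb), mul_zero]
  · simp

lemma sum_up_next_NN (μ : Fin n → ℝ) (s : Fin (n + 2)) (a : Fin (n + 1)) (m : Fin n) :
    ∑ m', μ m' * (NN n).up m' s a m * (NN n).next m' s a = μ m * (NN n).next m s a := by
  rw [Finset.sum_eq_single m]
  · simp [NN]
  · intro b _ hb
    have : (NN n).up b s a m = 0 := by
      simp only [NN]; rw [if_neg (Ne.symm hb)]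
    rw [this, mul_zero, zero_mul]
  · simp

lemma stepNN_notP1 (μ : Fin n → ℝ) (s : Fin (n + 2)) (a : Fin (n + 1))
    (hs : (Gme n).P1 s = false) :
    stepDist (Gme n) (NN n) μ s a = μ := by
  unfold stepDist
  rw [if_neg (by simp [hs])]
  funext m
  exact sum_up_NN n μ s a m

lemma unif_mul_next (T : Finset (Fin n)) (i : Fin n) (m : Fin n) :
    unif n T m * (NN n).next m (sOf n i) (bact n) =
      if m ∈ T.erase i then (T.card : ℝ)⁻¹ else 0 := by
  rw [nextNN_s]
  by_cases h1 : m ∈ T <;> by_cases h2 : m = i <;>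
    simp [unif, h1, h2, Finset.mem_erase]

lemma denom_si (T : Finset (Fin n)) (i : Fin n) :
    ∑ m', unif n T m' * (NN n).next m' (sOf n i) (bact n) =
      ((T.erase i).card : ℝ) * (T.card : ℝ)⁻¹ := by
  simp only [unif_mul_next]
  rw [Finset.sum_ite_mem, Finset.univ_inter, Finset.sum_const, nsmul_eq_mul]

lemma stepNN_si (T : Finset (Fin n)) (i : Fin n) (hi : i ∈ T)
    (hne : (T.erase i).Nonempty) :
    stepDist (Gme n) (NN n) (unif n T) (sOf n i) (bact n) = unif n (T.erase i) := by
  have hTpos : (0 : ℝ) < T.card := by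
    have := Finset.card_pos.mpr ⟨i, hi⟩
    exact_mod_cast this
  have hEpos : (0 : ℝ) < (T.erase i).card := by
    have := Finset.card_pos.mpr hne
    exact_mod_cast this
  have hd : ∑ m', unif n T m' * (NN n).next m' (sOf n i) (bact n) =
      ((T.erase i).card : ℝ) * (T.card : ℝ)⁻¹ := denom_si n T i
  have hdne : (∑ m', unif n T m' * (NN n).next m' (sOf n i) (bact n)) ≠ 0 := by
    rw [hd]; positivity
  unfold stepDist
  rw [if_pos ⟨P1_s n i, hdne⟩]
  funext m
  rw [sum_up_next_NN, unif_mul_next, hd]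
  by_cases hm : m ∈ T.erase i
  · rw [if_pos hm, unif, if_pos hm]
    field_simp
  · rw [if_neg hm, unif, if_neg hm, zero_div]

/-- The observable word generated by visiting the states `s_i`, `i ∈ l`. -/
def wordOf : List (Fin n) → List (Fin (n + 2) × Fin (n + 1))
  | [] => []
  | i :: l => (tst n, aOf n i) :: (sOf n i, bact n) :: wordOf l

/-- The steps of the history visiting the states `s_i`, `i ∈ l`. -/
def stepsOf : List (Fin n) → List (Fin (n + 1) × Fin (n + 2))
  | [] => []
  | i :: l => (aOf n i, sOf n i) :: (bact n, tst n) :: stepsOf l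

lemma wordOf_append (l l' : List (Fin n)) :
    wordOf n (l ++ l') = wordOf n l ++ wordOf n l' := by
  induction l with
  | nil => rfl
  | cons i l ih => simp [wordOf, ih]

lemma memDist_append (G : Game S A) {k : ℕ} (N : Mealy k S A)
    (w v : List (S × A)) :
    memDist G N (w ++ v) = v.foldl (fun μ p => stepDist G N μ p.1 p.2) (memDist G N w) := by
  simp [memDist, List.foldl_append]

lemma compl_toFinset_append (l : List (Fin n)) (i : Fin n) :
    ((l ++ [i]).toFinsetᶜ : Finset (Fin n)) = (l.toFinsetᶜ : Finset (Fin n)).erase i := by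
  ext m
  simp only [Finset.mem_compl, List.mem_toFinset, List.mem_append, List.mem_singleton,
    Finset.mem_erase]
  tauto

lemma memDist_wordOf (l : List (Fin n)) (hl : l.Nodup)
    (hne : ((l.toFinsetᶜ : Finset (Fin n))).Nonempty) :
    memDist (Gme n) (NN n) (wordOf n l) = unif n (l.toFinsetᶜ) := by
  induction l using List.reverseRecOn with
  | nil =>
      funext m
      simp [wordOf, memDist, NN, unif]
  | append_singleton l i ih =>
      have hl' : l.Nodup := (List.nodup_append.mp hl).1
      have hil : i ∉ l := by
        intro hc
        exact (List.nodup_append.mp hl).2.2 i hc i (List.mem_singleton_self i) rfl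
      have hco : ((l ++ [i]).toFinsetᶜ : Finset (Fin n)) = (l.toFinsetᶜ).erase i :=
        compl_toFinset_append n l i
      have hne' : ((l.toFinsetᶜ : Finset (Fin n))).Nonempty := by
        rw [hco] at hne
        exact hne.mono (Finset.erase_subset _ _)
      have hiT : i ∈ (l.toFinsetᶜ : Finset (Fin n)) := by
        simp [Finset.mem_compl, hil]
      rw [wordOf_append, memDist_append, ih hl' hne']
      simp only [wordOf, List.foldl_cons, List.foldl_nil]
      rw [stepNN_notP1 n _ _ _ (P1_t n), stepNN_si n _ i hiT (by rw [← hco]; exact hne), hco]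

/-- The uniform Player-2 strategy. -/
noncomputable def sig2 : List (Fin (n + 2) × Fin (n + 1)) → Fin (n + 2) → Fin (n + 1) → ℝ :=
  fun _ _ _ => (((n : ℕ) : ℝ) + 1)⁻¹

lemma sig2_isStrategy : IsStrategy (sig2 n) := by
  constructor
  · intro w s a; unfold sig2; positivity
  · intro w s
    simp only [sig2, Finset.sum_const, Finset.card_univ, Fintype.card_fin, nsmul_eq_mul]
    have : (((n : ℕ) : ℝ) + 1) ≠ 0 := by positivity
    push_cast
    field_simp

lemma stratM_star (T : Finset (Fin n)) (w : List (Fin (n + 2) × Fin (n + 1)))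
    (h : memDist (Gme n) (NN n) w = unif n T) (j : Fin n) :
    mealyStrat (Gme n) (NN n) w (sstar n) (aOf n j) = if j ∈ T then (T.card : ℝ)⁻¹ else 0 := by
  unfold mealyStrat
  rw [h, Finset.sum_eq_single j]
  · rw [nextNN_star, if_pos rfl, mul_one]
    rfl
  · intro m _ hm
    rw [nextNN_star, if_neg, mul_zero]
    intro hc
    exact hm (Fin.ext (by simpa [aOf_val] using (congrArg Fin.val hc))).symm
  · simp

lemma stratM_si (T : Finset (Fin n)) (w : List (Fin (n + 2) × Fin (n + 1)))
    (h : memDist (Gme n) (NN n) w = unif n T) (i : Fin n) :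
    mealyStrat (Gme n) (NN n) w (sOf n i) (bact n) =
      ((T.erase i).card : ℝ) * (T.card : ℝ)⁻¹ := by
  unfold mealyStrat
  rw [h]
  exact denom_si n T i

lemma hw_aux : ∀ (r done : List (Fin n)) (tail : List (Fin (n + 1) × Fin (n + 2))),
    hw (wordOf n done) (tst n) (stepsOf n r ++ tail) =
      hw (wordOf n (done ++ r)) (tst n) tail := by
  intro r
  induction r with
  | nil => intro done tail; simp [stepsOf]
  | cons i r ih =>
      intro done tail
      simp only [stepsOf, List.cons_append, hw, List.append_eq]
      have h1 : wordOf n done ++ [(tst n, aOf n i)] ++ [(sOf n i, bact n)] =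
          wordOf n (done ++ [i]) := by
        rw [wordOf_append]
        simp [wordOf]
      rw [h1, ih (done ++ [i]) tail, List.append_assoc, List.singleton_append]

lemma hpM_aux : ∀ (r done : List (Fin n)), (done ++ r).Nodup →
    (((done ++ r).toFinsetᶜ : Finset (Fin n))).Nonempty →
    ∃ C : ℝ, 0 < C ∧ ∀ tail,
      hp (Gme n) (mealyStrat (Gme n) (NN n)) (sig2 n) (wordOf n done) (tst n)
          (stepsOf n r ++ tail)
        = C * hp (Gme n) (mealyStrat (Gme n) (NN n)) (sig2 n) (wordOf n (done ++ r)) (tst n)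
            tail := by
  intro r
  induction r with
  | nil =>
      intro done _ _
      exact ⟨1, one_pos, fun tail => by simp [stepsOf]⟩
  | cons i r ih =>
      intro done hnd hne
      have hndone : done.Nodup := hnd.of_append_left
      have hidone : i ∉ done := fun hc =>
        (List.nodup_append.mp hnd).2.2 i hc i List.mem_cons_self rfl
      have hne_done : ((done.toFinsetᶜ : Finset (Fin n))).Nonempty := by
        obtain ⟨x, hx⟩ := hne
        refine ⟨x, ?_⟩
        simp only [Finset.mem_compl, List.mem_toFinset, List.mem_append] at hx ⊢
        tauto
      have hmem : memDist (Gme n) (NN n) (wordOf n done) = unif n done.toFinsetᶜ :=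
        memDist_wordOf n done hndone hne_done
      have hiT : i ∈ (done.toFinsetᶜ : Finset (Fin n)) := by
        simp [Finset.mem_compl, hidone]
      have herase_ne : (((done.toFinsetᶜ : Finset (Fin n))).erase i).Nonempty := by
        obtain ⟨x, hx⟩ := hne
        refine ⟨x, ?_⟩
        simp only [Finset.mem_compl, List.mem_toFinset, List.mem_append,
          List.mem_cons] at hx
        simp only [Finset.mem_erase, Finset.mem_compl, List.mem_toFinset]
        tauto
      have hTpos : (0 : ℝ) < (done.toFinsetᶜ : Finset (Fin n)).card := by
        exact_mod_cast Finset.card_pos.mpr ⟨i, hiT⟩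
      have hEpos : (0 : ℝ) < (((done.toFinsetᶜ : Finset (Fin n))).erase i).card := by
        exact_mod_cast Finset.card_pos.mpr herase_ne
      set q : ℝ := ((((done.toFinsetᶜ : Finset (Fin n))).erase i).card : ℝ) *
        (((done.toFinsetᶜ : Finset (Fin n)).card : ℝ))⁻¹ with hqdef
      have hq : 0 < q := by positivity
      have hmem2 : memDist (Gme n) (NN n) (wordOf n done ++ [(tst n, aOf n i)]) =
          unif n done.toFinsetᶜ := by
        rw [memDist_append, List.foldl_cons, List.foldl_nil,
          stepNN_notP1 n _ _ _ (P1_t n), hmem]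
      have hstrat : mealyStrat (Gme n) (NN n) (wordOf n done ++ [(tst n, aOf n i)])
          (sOf n i) (bact n) = q := stratM_si n _ _ hmem2 i
      have hl : (done ++ [i]) ++ r = done ++ i :: r := by simp
      obtain ⟨C, hC, hCe⟩ := ih (done ++ [i]) (by rwa [hl]) (by rwa [hl])
      rw [hl] at hCe
      refine ⟨(((n : ℕ) : ℝ) + 1)⁻¹ * q * C,
        mul_pos (mul_pos (by positivity) hq) hC, fun tail => ?_⟩
      have hword : (wordOf n done ++ [(tst n, aOf n i)]) ++ [(sOf n i, bact n)] =
          wordOf n (done ++ [i]) := by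
        rw [wordOf_append]
        simp [wordOf]
      simp only [stepsOf, List.cons_append, hp, P1_t n, P1_s n i, Bool.false_eq_true,
        if_false, if_true, delta_eq_one n (nxt_t_a n i), delta_eq_one n (nxt_s n i (bact n)),
        List.append_eq]
      rw [hword, hstrat, hCe tail]
      simp only [sig2]
      ring

end Construction

lemma ite_inst {p : Prop} {α : Type} (i1 i2 : Decidable p) (a b : α) :
    (@ite _ p i1 a b) = @ite _ p i2 a b := by
  rw [Subsingleton.elim i1 i2]

lemma sum_dirac_mul {k : ℕ} (m0 : Fin k) (f : Fin k → ℝ) :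
    ∑ m', (if m' = m0 then (1 : ℝ) else 0) * f m' = f m0 := by
  rw [Finset.sum_eq_single m0]
  · rw [if_pos rfl, one_mul]
  · intro b _ hb; rw [if_neg hb, zero_mul]
  · simp

lemma memDist_det {k : ℕ} (G : Game S A) (B : Mealy k S A) (hI : DetInit B) (hU : DetUp B)
    (w : List (S × A)) :
    ∃ m0 : Fin k, memDist G B w = fun m => if m = m0 then 1 else 0 := by
  induction w using List.reverseRecOn with
  | nil =>
      obtain ⟨m0, h⟩ := hI
      refine ⟨m0, funext fun y => ?_⟩
      show B.init y = _
      rw [h y]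
      exact ite_inst _ _ _ _
  | append_singleton w p ihw =>
      obtain ⟨m0, h0⟩ := ihw
      obtain ⟨m1, h1'⟩ := hU m0 p.1 p.2
      have h1 : ∀ y, B.up m0 p.1 p.2 y = if y = m1 then 1 else 0 :=
        fun y => by rw [h1' y]; exact ite_inst _ _ _ _
      refine ⟨m1, ?_⟩
      rw [memDist_append, List.foldl_cons, List.foldl_nil, h0]
      have hd : (∑ m', (if m' = m0 then (1 : ℝ) else 0) * B.next m' p.1 p.2) =
          B.next m0 p.1 p.2 := sum_dirac_mul m0 _
      have hnum : ∀ m, (∑ m', (if m' = m0 then (1 : ℝ) else 0) * B.up m' p.1 p.2 m *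
          B.next m' p.1 p.2) = (if m = m1 then 1 else 0) * B.next m0 p.1 p.2 := by
        intro m
        rw [Finset.sum_eq_single m0]
        · rw [if_pos rfl, one_mul, h1]
        · intro b _ hb; rw [if_neg hb, zero_mul, zero_mul]
        · simp
      have hup : ∀ m, (∑ m', (if m' = m0 then (1 : ℝ) else 0) * B.up m' p.1 p.2 m) =
          (if m = m1 then 1 else 0) := by
        intro m
        rw [Finset.sum_eq_single m0]
        · rw [if_pos rfl, one_mul, h1]
        · intro b _ hb; rw [if_neg hb, zero_mul]
        · simp
      unfold stepDist
      split
      · next hc =>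
          funext m
          rw [hnum m]
          have hne := hc.2
          rw [hd] at hne ⊢
          by_cases hm : m = m1
          · rw [if_pos hm, one_mul, div_self hne]
          · rw [if_neg hm, zero_mul, zero_div]
      · next hc =>
          funext m
          exact hup m

lemma stratB_det {k : ℕ} (G : Game S A) (B : Mealy k S A) {w : List (S × A)} {m0 : Fin k}
    (h : memDist G B w = fun m => if m = m0 then 1 else 0) (s : S) (a : A) :
    mealyStrat G B w s a = B.next m0 s a := by
  unfold mealyStrat
  rw [h]
  exact sum_dirac_mul m0 _

lemma key (n : ℕ) {k : ℕ} (B : Mealy k (Fin (n + 2)) (Fin (n + 1)))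
    (hI : DetInit B) (hU : DetUp B)
    (hOE : OutcomeEquiv (Gme n) (mealyStrat (Gme n) (NN n)) (mealyStrat (Gme n) B))
    (F : Finset (Fin n)) (hF : F.Nonempty) :
    ∃ m0 : Fin k,
      memDist (Gme n) B (wordOf n ((Fᶜ : Finset (Fin n)).toList) ++ [(tst n, bact n)]) =
        (fun m => if m = m0 then 1 else 0) ∧
      ∀ j : Fin n, B.next m0 (sstar n) (aOf n j) = if j ∈ F then (F.card : ℝ)⁻¹ else 0 := by
  classical
  set l := (Fᶜ : Finset (Fin n)).toList with hldef
  have hlnd : l.Nodup := Finset.nodup_toList _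
  have hlc : (l.toFinsetᶜ : Finset (Fin n)) = F := by
    rw [hldef, Finset.toList_toFinset, compl_compl]
  set wfull := wordOf n l ++ [(tst n, bact n)] with hwdef
  obtain ⟨m0, hm0⟩ := memDist_det (Gme n) B hI hU wfull
  refine ⟨m0, hm0, fun j => ?_⟩
  have hmemM : memDist (Gme n) (NN n) wfull = unif n F := by
    rw [hwdef, memDist_append, List.foldl_cons, List.foldl_nil,
      stepNN_notP1 n _ _ _ (P1_t n), memDist_wordOf n l hlnd (by rw [hlc]; exact hF), hlc]
  obtain ⟨C, hC, hCe⟩ := hpM_aux n l [] (by simpa using hlnd)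
    (by simp only [List.nil_append]; rw [hlc]; exact hF)
  have h0 : wordOf n ([] : List (Fin n)) = [] := rfl
  have h0' : ([] : List (Fin n)) ++ l = l := rfl
  rw [h0, h0'] at hCe
  have hT1 : hp (Gme n) (mealyStrat (Gme n) (NN n)) (sig2 n) (wordOf n l) (tst n)
      [(bact n, sstar n)] = (((n : ℕ) : ℝ) + 1)⁻¹ := by
    simp only [hp, P1_t n, Bool.false_eq_true, if_false, delta_eq_one n (nxt_t_b n), sig2]
    ring
  have hT2 : hp (Gme n) (mealyStrat (Gme n) (NN n)) (sig2 n) (wordOf n l) (tst n)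
      [(bact n, sstar n), (aOf n j, sstar n)] =
      (((n : ℕ) : ℝ) + 1)⁻¹ * (if j ∈ F then (F.card : ℝ)⁻¹ else 0) := by
    simp only [hp, P1_t n, P1_star n, Bool.false_eq_true, if_false, if_true,
      delta_eq_one n (nxt_t_b n), delta_eq_one n (nxt_star n (aOf n j)), sig2]
    rw [stratM_star n F (wordOf n l ++ [(tst n, bact n)]) hmemM j]
    ring
  have hhw : hw ([] : List (Fin (n + 2) × Fin (n + 1))) (tst n)
      (stepsOf n l ++ [(bact n, sstar n)]) = (wfull, sstar n) := by
    have h := hw_aux n l [] [(bact n, sstar n)]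
    rw [h0, h0'] at h
    rw [h]
    simp [hw, hwdef]
  have e1 : hp (Gme n) (mealyStrat (Gme n) (NN n)) (sig2 n) [] (tst n)
      (stepsOf n l ++ [(bact n, sstar n)])
      = hp (Gme n) (mealyStrat (Gme n) B) (sig2 n) [] (tst n)
        (stepsOf n l ++ [(bact n, sstar n)]) := by
    rw [← histProb_eq_hp, ← histProb_eq_hp]
    exact hOE (sig2 n) (sig2_isStrategy n) _ _
  have e2 : hp (Gme n) (mealyStrat (Gme n) (NN n)) (sig2 n) [] (tst n)
      (stepsOf n l ++ [(bact n, sstar n), (aOf n j, sstar n)])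
      = hp (Gme n) (mealyStrat (Gme n) B) (sig2 n) [] (tst n)
        (stepsOf n l ++ [(bact n, sstar n), (aOf n j, sstar n)]) := by
    rw [← histProb_eq_hp, ← histProb_eq_hp]
    exact hOE (sig2 n) (sig2_isStrategy n) _ _
  have hlist : stepsOf n l ++ [(bact n, sstar n), (aOf n j, sstar n)] =
      (stepsOf n l ++ [(bact n, sstar n)]) ++ [(aOf n j, sstar n)] := by simp
  have eB : hp (Gme n) (mealyStrat (Gme n) B) (sig2 n) [] (tst n)
      (stepsOf n l ++ [(bact n, sstar n), (aOf n j, sstar n)])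
      = hp (Gme n) (mealyStrat (Gme n) B) (sig2 n) [] (tst n)
          (stepsOf n l ++ [(bact n, sstar n)]) * B.next m0 (sstar n) (aOf n j) := by
    rw [hlist, hp_append, hhw]
    dsimp only
    rw [P1_star n, if_pos rfl, stratB_det (Gme n) B hm0,
      delta_eq_one n (nxt_star n (aOf n j))]
    ring
  have hM1 : hp (Gme n) (mealyStrat (Gme n) (NN n)) (sig2 n) [] (tst n)
      (stepsOf n l ++ [(bact n, sstar n)]) = C * (((n : ℕ) : ℝ) + 1)⁻¹ := by
    rw [hCe [(bact n, sstar n)], hT1]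
  have hM2 : hp (Gme n) (mealyStrat (Gme n) (NN n)) (sig2 n) [] (tst n)
      (stepsOf n l ++ [(bact n, sstar n), (aOf n j, sstar n)])
      = C * ((((n : ℕ) : ℝ) + 1)⁻¹ * (if j ∈ F then (F.card : ℝ)⁻¹ else 0)) := by
    rw [hCe [(bact n, sstar n), (aOf n j, sstar n)], hT2]
  rw [hM2, eB, ← e1, hM1] at e2
  have hpos : (0 : ℝ) < C * (((n : ℕ) : ℝ) + 1)⁻¹ := by positivity
  have : (C * (((n : ℕ) : ℝ) + 1)⁻¹) * (if j ∈ F then (F.card : ℝ)⁻¹ else 0)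
      = (C * (((n : ℕ) : ℝ) + 1)⁻¹) * B.next m0 (sstar n) (aOf n j) := by
    rw [← e2]; ring
  exact (mul_left_cancel₀ (ne_of_gt hpos) this).symm

end RDDProof

/-- For every `n ≥ 1` there are a deterministic two-player game with `n + 2`
states (and `n + 1` actions) and an RDD strategy of Player 1 with `n` memory
states such that every outcome-equivalent DRD strategy has at least `2^n - 1`
memory states. -/
theorem rdd_to_drd_exponential_blowup (n : ℕ) (hn : 1 ≤ n) :
    ∃ G : Game (Fin (n + 2)) (Fin (n + 1)),
      (∀ s a, IsDirac (G.delta s a)) ∧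
      ∃ N : Mealy n (Fin (n + 2)) (Fin (n + 1)),
        ProperMealy N ∧ DetNext N ∧ DetUp N ∧
        ∀ (k : ℕ) (B : Mealy k (Fin (n + 2)) (Fin (n + 1))),
          ProperMealy B → DetInit B → DetUp B →
          OutcomeEquiv G (mealyStrat G N) (mealyStrat G B) →
          2 ^ n - 1 ≤ k := by
  classical
  refine ⟨RDDProof.Gme n, ?_, RDDProof.NN n, RDDProof.properNN n hn, RDDProof.detNextNN n,
    RDDProof.detUpNN n, ?_⟩
  · intro s a
    refine ⟨RDDProof.nxt n s a, fun s' => ?_⟩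
    show (if s' = RDDProof.nxt n s a then (1 : ℝ) else 0) = _
    exact RDDProof.ite_inst _ _ _ _
  · intro k B _hB hI hU hOE
    have hinj : Function.Injective (fun F : Finset (Fin n) =>
        if h : F.Nonempty then
          some (Classical.choose (RDDProof.key n B hI hU hOE F h)) else (none : Option (Fin k))) := by
      intro F1 F2 hEq
      by_cases h1 : F1.Nonempty <;> by_cases h2 : F2.Nonempty
      · simp only [dif_pos h1, dif_pos h2, Option.some_inj] at hEq
        have hd1 := (Classical.choose_spec (RDDProof.key n B hI hU hOE F1 h1)).2
        have hd2 := (Classical.choose_spec (RDDProof.key n B hI hU hOE F2 h2)).2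
        rw [hEq] at hd1
        have c1 : ((F1.card : ℝ))⁻¹ ≠ 0 := by
          have : (0 : ℝ) < F1.card := by exact_mod_cast Finset.card_pos.mpr h1
          exact inv_ne_zero (ne_of_gt this)
        have c2 : ((F2.card : ℝ))⁻¹ ≠ 0 := by
          have : (0 : ℝ) < F2.card := by exact_mod_cast Finset.card_pos.mpr h2
          exact inv_ne_zero (ne_of_gt this)
        ext j
        have hj : (if j ∈ F1 then ((F1.card : ℝ))⁻¹ else 0)
            = (if j ∈ F2 then ((F2.card : ℝ))⁻¹ else 0) := (hd1 j).symm.trans (hd2 j)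
        by_cases hj1 : j ∈ F1 <;> by_cases hj2 : j ∈ F2
        · simp [hj1, hj2]
        · rw [if_pos hj1, if_neg hj2] at hj
          exact absurd hj c1
        · rw [if_neg hj1, if_pos hj2] at hj
          exact absurd hj.symm c2
        · simp [hj1, hj2]
      · simp only [dif_pos h1, dif_neg h2] at hEq
        exact absurd hEq (by simp)
      · simp only [dif_neg h1, dif_pos h2] at hEq
        exact absurd hEq (by simp)
      · rw [Finset.not_nonempty_iff_eq_empty] at h1 h2
        rw [h1, h2]
    have hcard := Fintype.card_le_of_injective _ hinj
    rw [Fintype.card_finset, Fintype.card_fin, Fintype.card_option, Fintype.card_fin] at hcard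
    omega
end

section
/- For every RRR strategy (fully randomised Mealy machine) M of Player i in a stochastic game, there exists an outcome-equivalent DRR strategy (deterministic initialisation, randomised outputs and updates) B with |B| = |M| + 1 memory states. -/
open scoped Classical

variable {S A : Type} [Fintype S] [Fintype A]

/-- Embedding of a distribution on `Fin n` into `Fin (n+1)` (zero at `last`). -/
noncomputable def liftDist {n : ℕ} (μ : Fin n → ℝ) : Fin (n + 1) → ℝ :=
  Fin.lastCases 0 μ

@[simp] lemma liftDist_castSucc {n : ℕ} (μ : Fin n → ℝ) (i : Fin n) :
    liftDist μ (Fin.castSucc i) = μ i := by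
  simp [liftDist]

@[simp] lemma liftDist_last {n : ℕ} (μ : Fin n → ℝ) :
    liftDist μ (Fin.last n) = 0 := by
  simp [liftDist]

lemma sum_liftDist {n : ℕ} (μ : Fin n → ℝ) :
    ∑ m, liftDist μ m = ∑ m, μ m := by
  rw [Fin.sum_univ_castSucc]; simp

/-- The DRR machine: fresh initial state `Fin.last n`, other states copy `N`. -/
noncomputable def extMealy (G : Game S A) {n : ℕ} (N : Mealy n S A) :
    Mealy (n + 1) S A where
  init m := if m = Fin.last n then 1 else 0
  next m s a :=
    Fin.lastCases (∑ m', N.init m' * N.next m' s a) (fun m0 => N.next m0 s a) m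
  up m s a :=
    Fin.lastCases (liftDist (stepDist G N N.init s a))
      (fun m0 => liftDist (N.up m0 s a)) m

lemma stepDist_nonneg (G : Game S A) {n : ℕ} (N : Mealy n S A)
    (hN : ProperMealy N) {μ : Fin n → ℝ} (hμ : ∀ m, 0 ≤ μ m) (s : S) (a : A) :
    ∀ m, 0 ≤ stepDist G N μ s a m := by
  intro m
  obtain ⟨-, -, hnn, -, hun, -⟩ := hN
  unfold stepDist
  split
  · rename_i h
    have hden : 0 ≤ ∑ m', μ m' * N.next m' s a :=
      Finset.sum_nonneg fun m' _ => mul_nonneg (hμ m') (hnn m' s a)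
    exact div_nonneg
      (Finset.sum_nonneg fun m' _ =>
        mul_nonneg (mul_nonneg (hμ m') (hun m' s a m)) (hnn m' s a)) hden
  · exact Finset.sum_nonneg fun m' _ => mul_nonneg (hμ m') (hun m' s a m)

lemma stepDist_sum (G : Game S A) {n : ℕ} (N : Mealy n S A)
    (hN : ProperMealy N) {μ : Fin n → ℝ} (hμ : ∑ m, μ m = 1) (s : S) (a : A) :
    ∑ m, stepDist G N μ s a m = 1 := by
  obtain ⟨-, -, -, -, -, hus⟩ := hN
  unfold stepDist
  split
  · rename_i h
    rw [← Finset.sum_div]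
    rw [div_eq_one_iff_eq h.2]
    rw [Finset.sum_comm]
    apply Finset.sum_congr rfl
    intro m' _
    have : ∑ m, μ m' * N.up m' s a m * N.next m' s a
        = μ m' * N.next m' s a * ∑ m, N.up m' s a m := by
      rw [Finset.mul_sum]; apply Finset.sum_congr rfl; intro m _; ring
    rw [this, hus m' s a, mul_one]
  · rw [Finset.sum_comm]
    calc ∑ m', ∑ m, μ m' * N.up m' s a m
        = ∑ m', μ m' * ∑ m, N.up m' s a m := by
          apply Finset.sum_congr rfl; intro m' _; rw [Finset.mul_sum]
      _ = 1 := by simp only [hus, mul_one]; exact hμ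

/-- The key commuting lemma for non-initial steps. -/
lemma step_lift (G : Game S A) {n : ℕ} (N : Mealy n S A) (μ : Fin n → ℝ)
    (s : S) (a : A) :
    stepDist G (extMealy G N) (liftDist μ) s a = liftDist (stepDist G N μ s a) := by
  have hden : ∑ m', liftDist μ m' * (extMealy G N).next m' s a
      = ∑ m', μ m' * N.next m' s a := by
    rw [Fin.sum_univ_castSucc]
    simp [extMealy]
  have hnum : ∀ m0 : Fin n,
      ∑ m', liftDist μ m' * (extMealy G N).up m' s a (Fin.castSucc m0)
          * (extMealy G N).next m' s a
      = ∑ m', μ m' * N.up m' s a m0 * N.next m' s a := by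
    intro m0
    rw [Fin.sum_univ_castSucc]
    simp [extMealy]
  have hnumlast :
      ∑ m', liftDist μ m' * (extMealy G N).up m' s a (Fin.last n)
          * (extMealy G N).next m' s a = 0 := by
    rw [Fin.sum_univ_castSucc]
    simp [extMealy]
  have hmixlast : ∑ m', liftDist μ m' * (extMealy G N).up m' s a (Fin.last n) = 0 := by
    rw [Fin.sum_univ_castSucc]
    simp [extMealy]
  have hmix : ∀ m0 : Fin n,
      ∑ m', liftDist μ m' * (extMealy G N).up m' s a (Fin.castSucc m0)
      = ∑ m', μ m' * N.up m' s a m0 := by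
    intro m0
    rw [Fin.sum_univ_castSucc]
    simp [extMealy]
  unfold stepDist
  rw [hden]
  split
  · funext m
    refine Fin.lastCases ?_ ?_ m
    · rw [hnumlast, zero_div, liftDist_last]
    · intro m0
      rw [hnum m0, liftDist_castSucc]
  · funext m
    refine Fin.lastCases ?_ ?_ m
    · rw [hmixlast, liftDist_last]
    · intro m0
      rw [hmix m0, liftDist_castSucc]

/-- The first step from the fresh initial state. -/
lemma step_init (G : Game S A) {n : ℕ} (N : Mealy n S A) (s : S) (a : A) :
    stepDist G (extMealy G N) (extMealy G N).init s a
      = liftDist (stepDist G N N.init s a) := by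
  have hinit : ∀ f : Fin (n + 1) → ℝ,
      ∑ m', (extMealy G N).init m' * f m' = f (Fin.last n) := by
    intro f
    rw [Fin.sum_univ_castSucc]
    simp [extMealy, (Fin.castSucc_lt_last _).ne]
  have hden : ∑ m', (extMealy G N).init m' * (extMealy G N).next m' s a
      = ∑ m', N.init m' * N.next m' s a := by
    rw [hinit]; simp [extMealy]
  unfold stepDist
  rw [hden]
  by_cases h : G.P1 s = true ∧ (∑ m', N.init m' * N.next m' s a) ≠ 0
  · rw [if_pos h]
    funext m
    have : ∑ m', (extMealy G N).init m' * (extMealy G N).up m' s a m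
          * (extMealy G N).next m' s a
        = liftDist (stepDist G N N.init s a) m * ∑ m', N.init m' * N.next m' s a := by
      calc ∑ m', ((extMealy G N).init m' * (extMealy G N).up m' s a m)
              * (extMealy G N).next m' s a
          = ∑ m', (extMealy G N).init m' * ((extMealy G N).up m' s a m
              * (extMealy G N).next m' s a) := by
            apply Finset.sum_congr rfl; intro m' _; ring
        _ = (extMealy G N).up (Fin.last n) s a m
              * (extMealy G N).next (Fin.last n) s a := hinit _
        _ = liftDist (stepDist G N N.init s a) m * ∑ m', N.init m' * N.next m' s a := by
            simp [extMealy]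
    rw [this, mul_div_assoc, div_self h.2, mul_one]
    rfl
  · rw [if_neg h]
    funext m
    calc ∑ m', (extMealy G N).init m' * (extMealy G N).up m' s a m
        = (extMealy G N).up (Fin.last n) s a m := hinit _
      _ = liftDist (stepDist G N N.init s a) m := by simp [extMealy]

lemma foldl_lift (G : Game S A) {n : ℕ} (N : Mealy n S A)
    (w : List (S × A)) (μ : Fin n → ℝ) :
    w.foldl (fun ν p => stepDist G (extMealy G N) ν p.1 p.2) (liftDist μ)
      = liftDist (w.foldl (fun ν p => stepDist G N ν p.1 p.2) μ) := by
  induction w generalizing μ with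
  | nil => rfl
  | cons p w ih =>
      simp only [List.foldl_cons, step_lift]
      exact ih _

lemma mealyStrat_ext (G : Game S A) {n : ℕ} (N : Mealy n S A) :
    mealyStrat G N = mealyStrat G (extMealy G N) := by
  funext w s a
  cases w with
  | nil =>
      unfold mealyStrat memDist
      simp only [List.foldl_nil]
      have : ∀ f : Fin (n + 1) → ℝ,
          ∑ m, (extMealy G N).init m * f m = f (Fin.last n) := by
        intro f
        rw [Fin.sum_univ_castSucc]
        simp [extMealy, (Fin.castSucc_lt_last _).ne]
      rw [this]
      simp [extMealy]
  | cons p w =>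
      unfold mealyStrat memDist
      simp only [List.foldl_cons]
      rw [step_init, foldl_lift]
      rw [Fin.sum_univ_castSucc]
      simp [extMealy]

/-- Every RRR strategy (fully randomised Mealy machine) admits an
outcome-equivalent DRR strategy (deterministic initialisation, randomised
outputs and updates) with exactly `|M| + 1` memory states. -/
theorem rrr_eq_drr (S A : Type) [Fintype S] [Fintype A]
    (G : Game S A) (n : ℕ) (N : Mealy n S A) (hN : ProperMealy N) :
    ∃ B : Mealy (n + 1) S A, ProperMealy B ∧ DetInit B ∧
      OutcomeEquiv G (mealyStrat G N) (mealyStrat G B) := by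
  obtain ⟨hin, his, hnn, hns, hun, hus⟩ := hN
  refine ⟨extMealy G N, ?_, ⟨Fin.last n, fun y => by simp [extMealy]⟩, ?_⟩
  · refine ⟨?_, ?_, ?_, ?_, ?_, ?_⟩
    · intro m; simp only [extMealy]; split <;> norm_num
    · simp only [extMealy]
      rw [Fin.sum_univ_castSucc]
      simp [(Fin.castSucc_lt_last _).ne]
    · intro m s a
      refine Fin.lastCases ?_ ?_ m
      · simp only [extMealy, Fin.lastCases_last]
        exact Finset.sum_nonneg fun m' _ => mul_nonneg (hin m') (hnn m' s a)
      · intro m0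
        simp only [extMealy, Fin.lastCases_castSucc]
        exact hnn m0 s a
    · intro m s
      refine Fin.lastCases ?_ ?_ m
      · simp only [extMealy, Fin.lastCases_last]
        rw [Finset.sum_comm]
        calc ∑ m', ∑ a, N.init m' * N.next m' s a
            = ∑ m', N.init m' * ∑ a, N.next m' s a := by
              apply Finset.sum_congr rfl; intro m' _; rw [Finset.mul_sum]
          _ = 1 := by simp only [hns, mul_one]; exact his
      · intro m0
        simp only [extMealy, Fin.lastCases_castSucc]
        exact hns m0 s
    · intro m s a m'
      refine Fin.lastCases ?_ ?_ m
      · simp only [extMealy, Fin.lastCases_last]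
        refine Fin.lastCases ?_ ?_ m'
        · simp
        · intro m0
          rw [liftDist_castSucc]
          exact stepDist_nonneg G N ⟨hin, his, hnn, hns, hun, hus⟩ hin s a m0
      · intro m0
        simp only [extMealy, Fin.lastCases_castSucc]
        refine Fin.lastCases ?_ ?_ m'
        · simp
        · intro m1; rw [liftDist_castSucc]; exact hun m0 s a m1
    · intro m s a
      refine Fin.lastCases ?_ ?_ m
      · simp only [extMealy, Fin.lastCases_last]
        rw [sum_liftDist]
        exact stepDist_sum G N ⟨hin, his, hnn, hns, hun, hus⟩ his s a
      · intro m0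
        simp only [extMealy, Fin.lastCases_castSucc]
        rw [sum_liftDist]
        exact hus m0 s a
  · rw [← mealyStrat_ext]
    intro σ2 _ s0 steps
    rfl
end

section
/- For every RRR strategy M = (M, μ_init, α_next, α_up) of Player i in a stochastic game, there exists an outcome-equivalent RDR strategy (randomised initialisation, deterministic outputs, randomised updates) B with at most |M|·(|S_i|·(|A|−1) + 1) memory states. -/
open scoped Classical

variable {S A : Type} [Fintype S] [Fintype A]

section RDRAux
set_option linter.unusedSectionVars false


/-- cumulative distribution along the enumeration of `A`. -/
noncomputable def cdf (q : S → A → ℝ) (s : S) (k : ℕ) : ℝ :=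
  ∑ i ∈ Finset.range k,
    if h : i < Fintype.card A then q s ((Fintype.equivFin A).symm ⟨i, h⟩) else 0

lemma cdf_zero (q : S → A → ℝ) (s : S) : cdf q s 0 = 0 := by simp [cdf]

lemma cdf_succ (q : S → A → ℝ) (s : S) (k : ℕ) (hk : k < Fintype.card A) :
    cdf q s (k + 1) = cdf q s k + q s ((Fintype.equivFin A).symm ⟨k, hk⟩) := by
  simp [cdf, Finset.sum_range_succ, hk]

lemma cdf_mono (q : S → A → ℝ) (hq0 : ∀ s a, 0 ≤ q s a) (s : S) :
    Monotone (cdf q s) := by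
  intro k k' h
  apply Finset.sum_le_sum_of_subset_of_nonneg (Finset.range_subset_range.2 h)
  intro i _ _
  split
  · exact hq0 _ _
  · exact le_rfl

lemma cdf_card (q : S → A → ℝ) (s : S) :
    cdf q s (Fintype.card A) = ∑ a, q s a := by
  rw [cdf]
  rw [Finset.sum_range fun i => if h : i < Fintype.card A then q s ((Fintype.equivFin A).symm ⟨i, h⟩) else 0]
  rw [← Equiv.sum_comp (Fintype.equivFin A).symm (q s)]
  apply Finset.sum_congr rfl
  intro i _
  simp

lemma cdf_le_one (q : S → A → ℝ) (hq0 : ∀ s a, 0 ≤ q s a) (hq1 : ∀ s, ∑ a, q s a = 1)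
    (s : S) (k : ℕ) : cdf q s k ≤ 1 := by
  rcases le_or_gt k (Fintype.card A) with h | h
  · rw [← hq1 s, ← cdf_card q s]; exact cdf_mono q hq0 s h
  · have : cdf q s k = cdf q s (Fintype.card A) := by
      unfold cdf
      rw [← Finset.sum_subset (Finset.range_subset_range.2 h.le)]
      intro i _ hi
      rw [dif_neg]
      simpa using hi
    rw [this, cdf_card, hq1]

lemma cdf_nonneg (q : S → A → ℝ) (hq0 : ∀ s a, 0 ≤ q s a) (s : S) (k : ℕ) :
    0 ≤ cdf q s k := by
  rw [← cdf_zero q s]; exact cdf_mono q hq0 s (Nat.zero_le k)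

/-- quantile function. -/
noncomputable def quant [Nonempty A] (q : S → A → ℝ) (t : ℝ) (s : S) : A :=
  if h : ∃ k, k < Fintype.card A ∧ t < cdf q s (k + 1) then
    (Fintype.equivFin A).symm ⟨Nat.find h, (Nat.find_spec h).1⟩
  else Classical.arbitrary A

lemma quant_eq_iff [Nonempty A] (q : S → A → ℝ) (hq0 : ∀ s a, 0 ≤ q s a)
    (hq1 : ∀ s, ∑ a, q s a = 1) (s : S) (t : ℝ) (ht0 : 0 ≤ t) (ht1 : t < 1) (a : A) :
    quant q t s = a ↔
      cdf q s ((Fintype.equivFin A) a : ℕ) ≤ t ∧ t < cdf q s (((Fintype.equivFin A) a : ℕ) + 1) := by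
  have hcard : 0 < Fintype.card A := Fintype.card_pos
  have hex : ∃ k, k < Fintype.card A ∧ t < cdf q s (k + 1) := by
    refine ⟨Fintype.card A - 1, Nat.sub_lt hcard one_pos, ?_⟩
    have he : Fintype.card A - 1 + 1 = Fintype.card A := by omega
    rw [he, cdf_card, hq1]; exact ht1
  rw [quant, dif_pos hex]
  constructor
  · intro h
    have ha : ((Fintype.equivFin A) a : ℕ) = Nat.find hex := by
      rw [← h]; simp
    rw [ha]
    refine ⟨?_, (Nat.find_spec hex).2⟩
    rcases Nat.eq_zero_or_pos (Nat.find hex) with h0 | h0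
    · rw [h0, cdf_zero]; exact ht0
    · have := Nat.find_min hex (Nat.sub_lt h0 one_pos)
      push_neg at this
      have hlt : Nat.find hex - 1 < Fintype.card A :=
        lt_of_le_of_lt (Nat.sub_le _ _) (Nat.find_spec hex).1
      have := this hlt
      have he : Nat.find hex - 1 + 1 = Nat.find hex := by omega
      rwa [he] at this
  · rintro ⟨h1, h2⟩
    have hfind : Nat.find hex = ((Fintype.equivFin A) a : ℕ) := by
      rw [Nat.find_eq_iff]
      refine ⟨⟨(((Fintype.equivFin A)) a).2, h2⟩, ?_⟩
      intro m hm hc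
      exact absurd (lt_of_lt_of_le hc.2 (le_trans (cdf_mono q hq0 s hm) h1)) (lt_irrefl t)
    apply (Fintype.equivFin A).symm_apply_eq.2
    exact Fin.ext hfind

lemma coupling [Nonempty A] (S' : Finset S) (q : S → A → ℝ)
    (hq0 : ∀ s a, 0 ≤ q s a) (hq1 : ∀ s, ∑ a, q s a = 1) :
    ∃ (p : Fin (S'.card * (Fintype.card A - 1) + 1) → ℝ)
      (f : Fin (S'.card * (Fintype.card A - 1) + 1) → S → A),
      (∀ j, 0 ≤ p j) ∧ (∑ j, p j = 1) ∧
      ∀ s ∈ S', ∀ a, (∑ j, if a = f j s then p j else 0) = q s a := by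
  set L := S'.card * (Fintype.card A - 1) + 1 with hL
  set C : Finset ℝ :=
    insert 0 (insert 1 ((S' ×ˢ Finset.Ico 1 (Fintype.card A)).image (fun x => cdf q x.1 x.2)))
    with hC
  have mem0 : (0 : ℝ) ∈ C := Finset.mem_insert_self _ _
  have mem1 : (1 : ℝ) ∈ C := Finset.mem_insert_of_mem (Finset.mem_insert_self _ _)
  have memBounds : ∀ x ∈ C, 0 ≤ x ∧ x ≤ 1 := by
    intro x hx
    rw [hC] at hx
    rcases Finset.mem_insert.1 hx with rfl | hx
    · norm_num
    rcases Finset.mem_insert.1 hx with rfl | hx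
    · norm_num
    rcases Finset.mem_image.1 hx with ⟨⟨s, k⟩, _, rfl⟩
    exact ⟨cdf_nonneg q hq0 _ _, cdf_le_one q hq0 hq1 _ _⟩
  set K := C.card with hK
  have hK2 : 2 ≤ K := by
    have : ({0, 1} : Finset ℝ) ⊆ C := by
      intro x hx
      rcases Finset.mem_insert.1 hx with rfl | hx
      · exact mem0
      · rw [Finset.mem_singleton.1 hx]; exact mem1
    have := Finset.card_le_card this
    simpa using this
  have hKL : K - 1 ≤ L := by
    have h1 : K ≤ 2 + ((S' ×ˢ Finset.Ico 1 (Fintype.card A)).image (fun x => cdf q x.1 x.2)).card := by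
      rw [hK, hC]
      calc _ ≤ _ + 1 := Finset.card_insert_le _ _
        _ ≤ (_ + 1) + 1 := by exact Nat.add_le_add_right (Finset.card_insert_le _ _) 1
        _ = 2 + _ := by ring
    have h2 : ((S' ×ˢ Finset.Ico 1 (Fintype.card A)).image (fun x => cdf q x.1 x.2)).card
        ≤ S'.card * (Fintype.card A - 1) := by
      calc _ ≤ (S' ×ˢ Finset.Ico 1 (Fintype.card A)).card := Finset.card_image_le
        _ = S'.card * (Fintype.card A - 1) := by rw [Finset.card_product, Nat.card_Ico]
    omega
  have hK1K : K - 1 < K := by omega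
  set eC := C.orderIsoOfFin (rfl : C.card = K) with heC
  set cfun : ℕ → ℝ := fun j => (eC ⟨min j (K - 1), by omega⟩ : ℝ) with hcfun
  -- basic facts about cfun
  have cfun_memC : ∀ j, cfun j ∈ C := fun j => (eC _).2
  have cfun_mono : Monotone cfun := by
    intro i j hij
    exact eC.monotone (by simp [Fin.mk_le_mk]; omega)
  have cfun_lt : ∀ i j, j ≤ K - 1 → i < j → cfun i < cfun j := by
    intro i j hj hij
    exact eC.strictMono (by simp [Fin.mk_lt_mk]; omega)
  have cfun_surj : ∀ x ∈ C, ∃ i ≤ K - 1, cfun i = x := by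
    intro x hx
    refine ⟨(eC.symm ⟨x, hx⟩ : Fin K), by omega, ?_⟩
    have : min ((eC.symm ⟨x, hx⟩ : Fin K) : ℕ) (K - 1) = ((eC.symm ⟨x, hx⟩ : Fin K) : ℕ) := by
      have := (eC.symm ⟨x, hx⟩).2; omega
    rw [hcfun]
    simp only [this]
    have : (⟨((eC.symm ⟨x, hx⟩ : Fin K) : ℕ), by omega⟩ : Fin K) = eC.symm ⟨x, hx⟩ := rfl
    rw [this, OrderIso.apply_symm_apply]
  have cfun_zero : cfun 0 = 0 := by
    obtain ⟨i, hi, hix⟩ := cfun_surj 0 mem0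
    have h1 : cfun 0 ≤ cfun i := cfun_mono (Nat.zero_le i)
    have h2 : 0 ≤ cfun 0 := (memBounds _ (cfun_memC 0)).1
    rw [hix] at h1
    linarith
  have cfun_top : ∀ j, K - 1 ≤ j → cfun j = 1 := by
    intro j hj
    obtain ⟨i, hi, hix⟩ := cfun_surj 1 mem1
    have h1 : cfun i ≤ cfun j := cfun_mono (le_trans hi hj)
    have h2 : cfun j ≤ 1 := (memBounds _ (cfun_memC j)).2
    rw [hix] at h1
    linarith
  refine ⟨fun j => cfun (j + 1) - cfun j, fun j s => quant q (cfun j) s, ?_, ?_, ?_⟩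
  · intro j
    show 0 ≤ cfun ((j : ℕ) + 1) - cfun (j : ℕ)
    have := cfun_mono (by omega : (j : ℕ) ≤ (j : ℕ) + 1)
    linarith
  · have h : (∑ j : Fin L, (cfun ((j : ℕ) + 1) - cfun (j : ℕ))) = cfun L - cfun 0 :=
      (Fin.sum_univ_eq_sum_range (fun j => cfun (j + 1) - cfun j) L).trans
        (Finset.sum_range_sub cfun L)
    rw [cfun_zero, cfun_top L (by omega)] at h
    exact h.trans (by ring)
  · intro s hs a
    set k := ((Fintype.equivFin A) a : ℕ) with hk
    have hka : k < Fintype.card A := ((Fintype.equivFin A) a).2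
    have hv1C : cdf q s k ∈ C := by
      rcases Nat.eq_zero_or_pos k with h0 | h0
      · rw [h0, cdf_zero]; exact mem0
      · rw [hC]
        refine Finset.mem_insert_of_mem (Finset.mem_insert_of_mem ?_)
        exact Finset.mem_image.2 ⟨(s, k), Finset.mem_product.2 ⟨hs, Finset.mem_Ico.2 ⟨h0, hka⟩⟩, rfl⟩
    have hv2C : cdf q s (k + 1) ∈ C := by
      rcases eq_or_lt_of_le (Nat.succ_le_of_lt hka) with h0 | h0
      · have h1 : cdf q s (k + 1) = 1 := by
          rw [show k + 1 = Fintype.card A from h0, cdf_card, hq1]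
        rw [h1]; exact mem1
      · rw [hC]
        refine Finset.mem_insert_of_mem (Finset.mem_insert_of_mem ?_)
        exact Finset.mem_image.2 ⟨(s, k + 1), Finset.mem_product.2
          ⟨hs, Finset.mem_Ico.2 ⟨Nat.succ_le_succ (Nat.zero_le k), h0⟩⟩, rfl⟩
    obtain ⟨j1, hj1le, hj1⟩ := cfun_surj _ hv1C
    obtain ⟨j2, hj2le, hj2⟩ := cfun_surj _ hv2C
    have hv12 : cdf q s k ≤ cdf q s (k + 1) := cdf_mono q hq0 s (Nat.le_succ k)
    have hj12 : j1 ≤ j2 := by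
      by_contra h
      push_neg at h
      have := cfun_lt j2 j1 hj1le h
      rw [hj1, hj2] at this
      linarith
    have key : ∀ j < L, (if a = quant q (cfun j) s then cfun (j + 1) - cfun j else 0)
        = if j1 ≤ j ∧ j < j2 then cfun (j + 1) - cfun j else 0 := by
      intro j hjL
      rcases le_or_gt (K - 1) j with hj | hj
      · have e1 : cfun j = 1 := cfun_top j hj
        have e2 : cfun (j + 1) = 1 := cfun_top (j + 1) (by omega)
        have : ¬(j1 ≤ j ∧ j < j2) := by rintro ⟨_, h2⟩; omega
        rw [if_neg this]
        split <;> [rw [e1, e2]; rfl] <;> ring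
      · have ht0 : 0 ≤ cfun j := (memBounds _ (cfun_memC j)).1
        have ht1 : cfun j < 1 := by
          have := cfun_lt j (K - 1) le_rfl hj
          rwa [cfun_top (K - 1) le_rfl] at this
        have hiff : a = quant q (cfun j) s ↔ (j1 ≤ j ∧ j < j2) := by
          rw [eq_comm, quant_eq_iff q hq0 hq1 s _ ht0 ht1 a, ← hk, ← hj1, ← hj2]
          constructor
          · rintro ⟨h1, h2⟩
            constructor
            · by_contra hcon
              push_neg at hcon
              have := cfun_lt j j1 hj1le hcon
              linarith
            · by_contra hcon
              push_neg at hcon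
              have := cfun_mono hcon
              linarith
          · rintro ⟨h1, h2⟩
            exact ⟨cfun_mono h1, cfun_lt j j2 hj2le h2⟩
        split_ifs with h1 h2 h2
        · rfl
        · exact absurd (hiff.1 h1) h2
        · exact absurd (hiff.2 h2) h1
        · rfl
    calc (∑ j : Fin L, if a = quant q (cfun (j : ℕ)) s then cfun ((j : ℕ) + 1) - cfun (j : ℕ) else 0)
        = ∑ j ∈ Finset.range L, if a = quant q (cfun j) s then cfun (j + 1) - cfun j else 0 :=
          Fin.sum_univ_eq_sum_range (fun j => if a = quant q (cfun j) s then cfun (j + 1) - cfun j else 0) L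
      _ = ∑ j ∈ Finset.range L, if j1 ≤ j ∧ j < j2 then cfun (j + 1) - cfun j else 0 := by
          apply Finset.sum_congr rfl
          intro j hj
          exact key j (Finset.mem_range.1 hj)
      _ = ∑ j ∈ Finset.Ico j1 j2, (cfun (j + 1) - cfun j) := by
          rw [← Finset.sum_filter]
          apply Finset.sum_congr ?_ (fun _ _ => rfl)
          ext j
          simp only [Finset.mem_filter, Finset.mem_range, Finset.mem_Ico]
          constructor
          · rintro ⟨_, h1, h2⟩; exact ⟨h1, h2⟩
          · rintro ⟨h1, h2⟩; exact ⟨by omega, h1, h2⟩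
      _ = cfun j2 - cfun j1 := by
          rw [Finset.sum_Ico_eq_sub _ hj12, Finset.sum_range_sub cfun, Finset.sum_range_sub cfun]
          ring
      _ = q s a := by
          rw [hj1, hj2, cdf_succ q s k hka]
          have ha : ((Fintype.equivFin A).symm ⟨k, hka⟩) = a := by
            rw [Equiv.symm_apply_eq]
          rw [ha]; ring


lemma histProb_congr (G : Game S A) (σ τ σ2 : List (S × A) → S → A → ℝ)
    (h : ∀ w s a, G.P1 s = true → σ w s a = τ w s a) (s0 : S) (steps : List (A × S)) :
    histProb G σ σ2 s0 steps = histProb G τ σ2 s0 steps := by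
  unfold histProb
  have : (fun (acc : ℝ × S × List (S × A)) (p : A × S) =>
      (acc.1 * (if G.P1 acc.2.1 then σ acc.2.2 acc.2.1 p.1 else σ2 acc.2.2 acc.2.1 p.1)
          * G.delta acc.2.1 p.1 p.2, p.2, acc.2.2 ++ [(acc.2.1, p.1)]))
      = (fun (acc : ℝ × S × List (S × A)) (p : A × S) =>
      (acc.1 * (if G.P1 acc.2.1 then τ acc.2.2 acc.2.1 p.1 else σ2 acc.2.2 acc.2.1 p.1)
          * G.delta acc.2.1 p.1 p.2, p.2, acc.2.2 ++ [(acc.2.1, p.1)])) := by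
    funext acc x
    by_cases hP : G.P1 acc.2.1 = true
    · simp only [hP, if_true, h acc.2.2 acc.2.1 x.1 hP]
    · simp only [Bool.not_eq_true] at hP
      simp only [hP, Bool.false_eq_true, if_false]
  rw [this]

lemma memDist_snoc (G : Game S A) {n : ℕ} (N : Mealy n S A) (w : List (S × A)) (x : S × A) :
    memDist G N (w ++ [x]) = stepDist G N (memDist G N w) x.1 x.2 := by
  simp [memDist, List.foldl_append]

end RDRAux

/-- Every RRR strategy admits an outcome-equivalent RDR strategy (randomised
initialisation, deterministic outputs, randomised updates) with at most
`|M| · (|S_1| · (|A| − 1) + 1)` memory states, where `S_1` is the set of states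
owned by the player. -/
theorem rrr_eq_rdr (S A : Type) [Fintype S] [Fintype A]
    (G : Game S A) (n : ℕ) (N : Mealy n S A) (hN : ProperMealy N) :
    ∃ (k : ℕ) (B : Mealy k S A), ProperMealy B ∧ DetNext B ∧
      OutcomeEquiv G (mealyStrat G N) (mealyStrat G B) ∧
      k ≤ n * ((Finset.univ.filter fun s => G.P1 s = true).card * (Fintype.card A - 1) + 1) := by
  classical
  obtain ⟨hN0, hN1, hN2, hN3, hN4, hN5⟩ := hN
  by_cases hS : Nonempty S
  case neg =>
    refine ⟨n, N, ⟨hN0, hN1, hN2, hN3, hN4, hN5⟩, ?_, ?_, ?_⟩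
    · intro m s; exact absurd ⟨s⟩ hS
    · intro σ2 _ s0 steps; exact absurd ⟨s0⟩ hS
    · exact Nat.le_mul_of_pos_right n (by omega)
  case pos =>
  have hA : Nonempty A := by
    by_contra hA
    have hAempty : IsEmpty A := not_nonempty_iff.1 hA
    rcases Nat.eq_zero_or_pos n with rfl | hn
    · simp at hN1
    · obtain ⟨s⟩ := hS
      have := hN3 ⟨0, hn⟩ s
      rw [Finset.univ_eq_empty, Finset.sum_empty] at this
      norm_num at this
  set S' := (Finset.univ.filter fun s => G.P1 s = true) with hS'
  set L := S'.card * (Fintype.card A - 1) + 1 with hLdef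
  choose p f hp0 hp1 hpf using fun m : Fin n => coupling S' (N.next m) (hN2 m) (hN3 m)
  set e := (finProdFinEquiv : Fin n × Fin L ≃ Fin (n * L)) with he
  set B : Mealy (n * L) S A :=
    { init := fun x => N.init (e.symm x).1 * p (e.symm x).1 (e.symm x).2
      next := fun x s a => if a = f (e.symm x).1 (e.symm x).2 s then 1 else 0
      up := fun x s a y => N.up (e.symm x).1 s a (e.symm y).1 * p (e.symm y).1 (e.symm y).2 }
    with hB
  have sum_pair : ∀ g : Fin (n * L) → ℝ, ∑ x, g x = ∑ m, ∑ j, g (e (m, j)) := by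
    intro g
    rw [← Equiv.sum_comp e g, Fintype.sum_prod_type]
  have hsymm : ∀ (m : Fin n) (j : Fin L), e.symm (e (m, j)) = (m, j) :=
    fun m j => Equiv.symm_apply_apply e (m, j)
  have hBinit : ∀ m j, B.init (e (m, j)) = N.init m * p m j := by
    intro m j; simp only [hB, hsymm]
  have hBnext : ∀ m j s a, B.next (e (m, j)) s a = if a = f m j s then 1 else 0 := by
    intro m j s a; simp only [hB, hsymm]
  have hBup : ∀ m j s a m' j', B.up (e (m, j)) s a (e (m', j')) = N.up m s a m' * p m' j' := by
    intro m j s a m' j'; simp only [hB, hsymm]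
  have hBup' : ∀ x s a m' j', B.up x s a (e (m', j')) = N.up (e.symm x).1 s a m' * p m' j' := by
    intro x s a m' j'; simp only [hB, hsymm]
  have hmarg : ∀ s, G.P1 s = true → ∀ (m : Fin n) (a : A),
      (∑ j, if a = f m j s then p m j else 0) = N.next m s a := by
    intro s hs m a
    exact hpf m s (by simp [hS', hs]) a
  have hcompNext : ∀ (μ : Fin n → ℝ) (ν : Fin (n * L) → ℝ),
      (∀ m j, ν (e (m, j)) = μ m * p m j) → ∀ s, G.P1 s = true → ∀ a,
      (∑ x, ν x * B.next x s a) = ∑ m, μ m * N.next m s a := by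
    intro μ ν hν s hs a
    rw [sum_pair]
    apply Finset.sum_congr rfl
    intro m _
    rw [← hmarg s hs m a, Finset.mul_sum]
    apply Finset.sum_congr rfl
    intro j _
    rw [hν m j, hBnext]
    split <;> ring
  have hcompUp : ∀ (μ : Fin n → ℝ) (ν : Fin (n * L) → ℝ),
      (∀ m j, ν (e (m, j)) = μ m * p m j) → ∀ s a (m' : Fin n) (j' : Fin L),
      (∑ x, ν x * B.up x s a (e (m', j'))) = (∑ m, μ m * N.up m s a m') * p m' j' := by
    intro μ ν hν s a m' j'
    rw [sum_pair, Finset.sum_mul]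
    apply Finset.sum_congr rfl
    intro m _
    have h1 : ∀ j : Fin L, ν (e (m, j)) * B.up (e (m, j)) s a (e (m', j'))
        = (μ m * N.up m s a m' * p m' j') * p m j := by
      intro j
      rw [hν m j, hBup]
      ring
    rw [Finset.sum_congr rfl (fun j _ => h1 j), ← Finset.mul_sum, hp1, mul_one]
  have hcompNum : ∀ (μ : Fin n → ℝ) (ν : Fin (n * L) → ℝ),
      (∀ m j, ν (e (m, j)) = μ m * p m j) → ∀ s, G.P1 s = true → ∀ a (m' : Fin n) (j' : Fin L),
      (∑ x, ν x * B.up x s a (e (m', j')) * B.next x s a)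
        = (∑ m, μ m * N.up m s a m' * N.next m s a) * p m' j' := by
    intro μ ν hν s hs a m' j'
    rw [sum_pair, Finset.sum_mul]
    apply Finset.sum_congr rfl
    intro m _
    have h1 : ∀ j : Fin L, ν (e (m, j)) * B.up (e (m, j)) s a (e (m', j')) * B.next (e (m, j)) s a
        = (μ m * N.up m s a m' * p m' j') * (if a = f m j s then p m j else 0) := by
      intro j
      rw [hν m j, hBup, hBnext]
      split <;> ring
    rw [Finset.sum_congr rfl (fun j _ => h1 j), ← Finset.mul_sum, hmarg s hs m a]
    ring
  have inv : ∀ w (m : Fin n) (j : Fin L), memDist G B w (e (m, j)) = memDist G N w m * p m j := by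
    intro w
    induction w using List.reverseRecOn with
    | nil =>
      intro m j
      exact hBinit m j
    | append_singleton w x ih =>
      intro m j
      obtain ⟨s, a⟩ := x
      rw [memDist_snoc, memDist_snoc]
      by_cases hP : G.P1 s = true
      · have hden := hcompNext _ _ ih s hP a
        by_cases hd : (∑ m', memDist G N w m' * N.next m' s a) = 0
        · rw [stepDist, stepDist, if_neg, if_neg]
          · exact hcompUp _ _ ih s a m j
          · rintro ⟨_, h2⟩; exact h2 hd
          · rintro ⟨_, h2⟩; exact h2 (by rw [hden]; exact hd)
        · rw [stepDist, stepDist, if_pos ⟨hP, by rw [hden]; exact hd⟩, if_pos ⟨hP, hd⟩]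
          show (∑ x, memDist G B w x * B.up x s a (e (m, j)) * B.next x s a)
              / (∑ x, memDist G B w x * B.next x s a)
            = (∑ m', memDist G N w m' * N.up m' s a m * N.next m' s a)
              / (∑ m', memDist G N w m' * N.next m' s a) * p m j
          rw [hcompNum _ _ ih s hP a m j, hden]
          ring
      · rw [stepDist, stepDist, if_neg, if_neg]
        · exact hcompUp _ _ ih s a m j
        · rintro ⟨h1, _⟩; exact hP h1
        · rintro ⟨h1, _⟩; exact hP h1
  refine ⟨n * L, B, ⟨?_, ?_, ?_, ?_, ?_, ?_⟩, ?_, ?_, le_refl _⟩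
  · intro x
    exact mul_nonneg (hN0 _) (hp0 _ _)
  · rw [sum_pair]
    have h1 : ∀ m : Fin n, (∑ j : Fin L, B.init (e (m, j))) = N.init m := by
      intro m
      rw [Finset.sum_congr rfl (fun j _ => hBinit m j), ← Finset.mul_sum, hp1, mul_one]
    rw [Finset.sum_congr rfl (fun m _ => h1 m)]
    exact hN1
  · intro x s a
    show (0:ℝ) ≤ if a = f (e.symm x).1 (e.symm x).2 s then 1 else 0
    split <;> norm_num
  · intro x s
    show (∑ a, if a = f (e.symm x).1 (e.symm x).2 s then (1:ℝ) else 0) = 1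
    simp
  · intro x s a y
    exact mul_nonneg (hN4 _ _ _ _) (hp0 _ _)
  · intro x s a
    rw [sum_pair]
    have h1 : ∀ m' : Fin n, (∑ j' : Fin L, B.up x s a (e (m', j'))) = N.up (e.symm x).1 s a m' := by
      intro m'
      rw [Finset.sum_congr rfl (fun j' _ => hBup' x s a m' j'), ← Finset.mul_sum, hp1, mul_one]
    rw [Finset.sum_congr rfl (fun m' _ => h1 m')]
    exact hN5 (e.symm x).1 s a
  · intro x s
    exact ⟨f (e.symm x).1 (e.symm x).2 s, fun a => rfl⟩
  · intro σ2 _ s0 steps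
    exact histProb_congr G _ _ σ2 (fun w s a hs => (hcompNext _ _ (inv w) s hs a).symm) s0 steps
end

section
/- Fix a memory state m of a stochastic Mealy machine and a linear order on the action set A. For s ∈ S_i and a ∈ A, let I(m, s, a) be the set of indices j such that the memoryless strategy σ^m_j (defined via cumulative probabilities of α_next(m, s)) prescribes a in s. Then Σ_{j ∈ I(m,s,a)} (x^m_{j+1} − x^m_j) = α_next(m, s)(a). -/
open scoped Classical

/-- Cumulative probability of the actions strictly below `a` under `α s`. -/
noncomputable def cumLT {S A : Type} [Fintype A] [LinearOrder A]
    (α : S → A → ℝ) (s : S) (a : A) : ℝ :=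
  ∑ a' ∈ Finset.univ.filter (· < a), α s a'

/-- Cumulative probability of the actions up to and including `a` under `α s`. -/
noncomputable def cumLE {S A : Type} [Fintype A] [LinearOrder A]
    (α : S → A → ℝ) (s : S) (a : A) : ℝ :=
  ∑ a' ∈ Finset.univ.filter (· ≤ a), α s a'

/-- The increasing enumeration `x_1 < ... < x_ℓ` of the cumulative values
`Σ_{a' < a} α s a'` (over all `s, a`) that are `< 1`. -/
noncomputable def cutList {S A : Type} [Fintype S] [Fintype A] [LinearOrder A]
    (α : S → A → ℝ) : List ℝ :=
  Finset.sort
    ((Finset.univ.image fun p : S × A => cumLT α p.1 p.2).filter (· < 1)) (· ≤ ·)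

/-- The `j`-th cut point (0-based); beyond the list, the value is `1`
(this realises `x_{ℓ+1} = 1`). -/
noncomputable def xval {S A : Type} [Fintype S] [Fintype A] [LinearOrder A]
    (α : S → A → ℝ) (j : ℕ) : ℝ :=
  (cutList α).getD j 1


lemma mem_cutList_lt_one {S A : Type} [Fintype S] [Fintype A] [LinearOrder A]
    {α : S → A → ℝ} {x : ℝ} (hx : x ∈ cutList α) : x < 1 := by
  rw [cutList, Finset.mem_sort] at hx
  exact (Finset.mem_filter.mp hx).2

lemma xval_mono {S A : Type} [Fintype S] [Fintype A] [LinearOrder A]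
    (α : S → A → ℝ) : Monotone (xval α) := by
  apply monotone_nat_of_le_succ
  intro j
  unfold xval
  by_cases h1 : j + 1 < (cutList α).length
  · have h0 : j < (cutList α).length := by omega
    rw [List.getD_eq_get _ _ ⟨j, h0⟩, List.getD_eq_get _ _ ⟨j + 1, h1⟩]
    exact List.Pairwise.rel_get_of_lt (Finset.pairwise_sort _ _)
      (show (⟨j, h0⟩ : Fin (cutList α).length) < ⟨j + 1, h1⟩ from Nat.lt_succ_self j)
  · have e1 : (cutList α).getD (j + 1) 1 = 1 := List.getD_eq_default _ _ (by omega)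
    rw [e1]
    by_cases h0 : j < (cutList α).length
    · rw [List.getD_eq_get _ _ ⟨j, h0⟩]
      exact le_of_lt (mem_cutList_lt_one (List.get_mem _ _))
    · rw [List.getD_eq_default _ _ (by omega)]

lemma xval_le_one {S A : Type} [Fintype S] [Fintype A] [LinearOrder A]
    (α : S → A → ℝ) (j : ℕ) : xval α j ≤ 1 := by
  unfold xval
  by_cases h0 : j < (cutList α).length
  · rw [List.getD_eq_get _ _ ⟨j, h0⟩]
    exact le_of_lt (mem_cutList_lt_one (List.get_mem _ _))
  · rw [List.getD_eq_default _ _ (by omega)]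

lemma xval_length {S A : Type} [Fintype S] [Fintype A] [LinearOrder A]
    (α : S → A → ℝ) : xval α (cutList α).length = 1 := by
  unfold xval
  rw [List.getD_eq_default _ _ le_rfl]

lemma exists_xval_of_mem {S A : Type} [Fintype S] [Fintype A] [LinearOrder A]
    {α : S → A → ℝ} {x : ℝ} (hx : x ∈ cutList α) : ∃ k, xval α k = x := by
  obtain ⟨k, hk⟩ := List.mem_iff_get.mp hx
  exact ⟨k, by rw [xval, List.getD_eq_get _ _ k, hk]⟩

lemma cumLT_mem {S A : Type} [Fintype S] [Fintype A] [LinearOrder A]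
    {α : S → A → ℝ} {s : S} {a : A} (h : cumLT α s a < 1) :
    cumLT α s a ∈ cutList α := by
  rw [cutList, Finset.mem_sort, Finset.mem_filter]
  exact ⟨Finset.mem_image.mpr ⟨(s, a), Finset.mem_univ _, rfl⟩, h⟩

/-- The memoryless strategy `σ_j` prescribes `a` at `s` iff
`cumLT α s a ≤ x_j < cumLE α s a`; the total length of the intervals of the
indices `j` at which `a` is prescribed at `s` equals `α s a`. -/
theorem interval_lengths_sum (S A : Type) [Fintype S] [Fintype A] [LinearOrder A]
    (α : S → A → ℝ) (hpos : ∀ s a, 0 ≤ α s a) (hsum : ∀ s, ∑ a, α s a = 1)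
    (s : S) (a : A) :
    ∑ j ∈ (Finset.range (cutList α).length).filter
        (fun j => cumLT α s a ≤ xval α j ∧ xval α j < cumLE α s a),
      (xval α (j + 1) - xval α j) = α s a := by
  classical
  set lo := cumLT α s a with hlo_def
  set hi := cumLE α s a with hhi_def
  have hle : hi = lo + α s a := by
    have hnot : a ∉ Finset.univ.filter (· < a) := by simp
    have hins : (Finset.univ.filter (· ≤ a) : Finset A)
        = insert a (Finset.univ.filter (· < a)) := by
      ext b
      simp [le_iff_lt_or_eq, or_comm]
    rw [hhi_def, cumLE, hins, Finset.sum_insert hnot, hlo_def, cumLT]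
    ring
  have hlo0 : 0 ≤ lo := Finset.sum_nonneg fun b _ => hpos s b
  have hhi1 : hi ≤ 1 := by
    rw [← hsum s]
    exact Finset.sum_le_sum_of_subset_of_nonneg (Finset.filter_subset _ _)
      (fun b _ _ => hpos s b)
  have hlohi : lo ≤ hi := by
    rw [hle]; linarith [hpos s a]
  have hk1 : ∃ k1, xval α k1 = hi := by
    by_cases h : hi < 1
    · have hne : (Finset.univ.filter (a < ·) : Finset A).Nonempty := by
        by_contra hc
        rw [Finset.not_nonempty_iff_eq_empty] at hc
        have huniv : (Finset.univ.filter (· ≤ a) : Finset A) = Finset.univ := by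
          ext b
          simp only [Finset.mem_filter, Finset.mem_univ, true_and, iff_true]
          by_contra hb
          push_neg at hb
          have : b ∈ (Finset.univ.filter (a < ·) : Finset A) := by simp [hb]
          simp [hc] at this
        rw [hhi_def, cumLE, huniv, hsum s] at h
        exact lt_irrefl _ h
      set a' := Finset.min' _ hne with ha'
      have ha'mem : a < a' := by
        exact (Finset.mem_filter.mp (Finset.min'_mem _ hne)).2
      have heq : cumLT α s a' = hi := by
        rw [hhi_def, cumLE, cumLT]
        congr 1
        ext b
        simp only [Finset.mem_filter, Finset.mem_univ, true_and]
        constructor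
        · intro hb
          by_contra hba
          push_neg at hba
          exact absurd (Finset.min'_le _ b (by simp [hba])) (not_le.mpr hb)
        · intro hb
          exact lt_of_le_of_lt hb ha'mem
      obtain ⟨k, hk⟩ := exists_xval_of_mem (cumLT_mem (heq ▸ h))
      exact ⟨k, hk.trans heq⟩
    · push_neg at h
      exact ⟨(cutList α).length, by rw [xval_length, le_antisymm hhi1 h]⟩
  have hk0 : ∃ k0, xval α k0 = lo := by
    by_cases h : lo < 1
    · exact exists_xval_of_mem (cumLT_mem h)
    · push_neg at h
      exact ⟨(cutList α).length,
        by rw [xval_length, le_antisymm (hlohi.trans hhi1) h]⟩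
  obtain ⟨k1, hk1⟩ := hk1
  obtain ⟨k0, hk0⟩ := hk0
  have hidx : ∀ {j k : ℕ}, xval α j < xval α k → j < k := by
    intro j k h
    by_contra hc
    push_neg at hc
    exact absurd (xval_mono α hc) (not_le.mpr h)
  set g : ℕ → ℝ := fun j => min hi (max lo (xval α j)) with hg
  have key : ∀ j, (if lo ≤ xval α j ∧ xval α j < hi
      then xval α (j + 1) - xval α j else 0) = g (j + 1) - g j := by
    intro j
    split_ifs with h
    · obtain ⟨h1, h2⟩ := h
      have hj1 : xval α (j + 1) ≤ hi := by
        have hjk : j < k1 := hidx (by rw [hk1]; exact h2)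
        calc xval α (j + 1) ≤ xval α k1 := xval_mono α hjk
          _ = hi := hk1
      simp only [hg]
      rw [max_eq_right h1, min_eq_right h2.le,
        max_eq_right (h1.trans (xval_mono α (Nat.le_succ j))), min_eq_right hj1]
    · push_neg at h
      rcases lt_or_ge (xval α j) lo with hl | hl
      · have hj1 : xval α (j + 1) ≤ lo := by
          have hjk : j < k0 := hidx (by rw [hk0]; exact hl)
          calc xval α (j + 1) ≤ xval α k0 := xval_mono α hjk
            _ = lo := hk0
        simp only [hg]
        rw [max_eq_left hl.le, max_eq_left hj1, min_eq_right hlohi]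
        ring
      · have h2 : hi ≤ xval α j := h hl
        simp only [hg]
        rw [max_eq_right (hlohi.trans h2), min_eq_left h2,
          max_eq_right (hlohi.trans (h2.trans (xval_mono α (Nat.le_succ j)))),
          min_eq_left (h2.trans (xval_mono α (Nat.le_succ j)))]
        ring
  rw [Finset.sum_filter]
  calc ∑ j ∈ Finset.range (cutList α).length,
        (if lo ≤ xval α j ∧ xval α j < hi then xval α (j + 1) - xval α j else 0)
      = ∑ j ∈ Finset.range (cutList α).length, (g (j + 1) - g j) :=
        Finset.sum_congr rfl (fun j _ => key j)
    _ = g (cutList α).length - g 0 := Finset.sum_range_sub g _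
    _ = α s a := by
        have h0 : xval α 0 ≤ lo := by
          rw [← hk0]; exact xval_mono α (Nat.zero_le _)
        simp only [hg, xval_length]
        rw [max_eq_right (hlohi.trans hhi1), min_eq_left hhi1,
          max_eq_left h0, min_eq_right hlohi]
        rw [hle]; ring
end

section
/- In the Markov chain induced by a stochastic Mealy machine M of Player 1, an opposing strategy σ2, and an initial state, the conditional distribution over memory states given the observed word satisfies: for w = w' s_k a_k consistent and s_k ∈ S_1, μ_w(m) = [Σ_{m'} μ_{w'}(m') · α_up(m', s_k, a_k)(m) · α_next(m', s_k)(a_k)] / [Σ_{m'} μ_{w'}(m') · α_next(m', s_k)(a_k)], and for s_k ∈ S_2, μ_w(m) = Σ_{m'} μ_{w'}(m') · α_up(m', s_k, a_k)(m). In particular, μ_w does not depend on σ2. -/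
open scoped Classical

variable {S A : Type} [Fintype S] [Fintype A]

/-- Probability of a finite trajectory (a sequence of triples
`(state, memory, action)`) in the Markov chain induced by the Mealy machine
`N`, the opposing strategy `σ2` and the initial state `s0`. -/
noncomputable def jointProb (G : Game S A) {n : ℕ} (N : Mealy n S A)
    (σ2 : List (S × A) → S → A → ℝ) (s0 : S) (ts : List (S × Fin n × A)) : ℝ :=
  (ts.foldl
    (fun (acc : ℝ × Option (S × Fin n × A) × List (S × A)) (t : S × Fin n × A) =>
      (acc.1 *
        (match acc.2.1 with
          | none => (if t.1 = s0 then (1 : ℝ) else 0) * N.init t.2.1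
          | some u => G.delta u.1 u.2.2 t.1 * N.up u.2.1 u.1 u.2.2 t.2.1) *
        (if G.P1 t.1 then N.next t.2.1 t.1 t.2.2 else σ2 acc.2.2 t.1 t.2.2),
       some t, acc.2.2 ++ [(t.1, t.2.2)]))
    ((1 : ℝ), (none : Option (S × Fin n × A)), ([] : List (S × A)))).1

/-- Trajectory obtained by interleaving the word `w` with memory states `ms`. -/
def mkTraj {n : ℕ} (w : List (S × A)) (ms : Fin w.length → Fin n) :
    List (S × Fin n × A) :=
  List.ofFn fun i : Fin w.length => ((w.get i).1, ms i, (w.get i).2)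

/-- `P(W_{k+1} = w)`: probability that the observed word is `w`. -/
noncomputable def wordProb (G : Game S A) {n : ℕ} (N : Mealy n S A)
    (σ2 : List (S × A) → S → A → ℝ) (s0 : S) (w : List (S × A)) : ℝ :=
  ∑ ms : Fin w.length → Fin n, jointProb G N σ2 s0 (mkTraj w ms)

/-- `P(M_{k+1} = m ∧ W_{k+1} = w)`: the memory after `w` is obtained by one
more update from the memory along the trajectory. -/
noncomputable def memNumer (G : Game S A) {n : ℕ} (N : Mealy n S A)
    (σ2 : List (S × A) → S → A → ℝ) (s0 : S) (w : List (S × A)) (m : Fin n) : ℝ :=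
  if h : w.length = 0 then N.init m
  else
    ∑ ms : Fin w.length → Fin n,
      jointProb G N σ2 s0 (mkTraj w ms) *
        N.up (ms ⟨w.length - 1, Nat.sub_lt (Nat.pos_of_ne_zero h) Nat.one_pos⟩)
          (w.get ⟨w.length - 1, Nat.sub_lt (Nat.pos_of_ne_zero h) Nat.one_pos⟩).1
          (w.get ⟨w.length - 1, Nat.sub_lt (Nat.pos_of_ne_zero h) Nat.one_pos⟩).2 m

/-- `μ_w(m) = P(M_{k+1} = m | W_{k+1} = w)`, the conditional distribution over
memory states given the observed word. -/
noncomputable def condMem (G : Game S A) {n : ℕ} (N : Mealy n S A)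
    (σ2 : List (S × A) → S → A → ℝ) (s0 : S) (w : List (S × A)) (m : Fin n) : ℝ :=
  memNumer G N σ2 s0 w m / wordProb G N σ2 s0 w


section AuxProof

variable (G : Game S A) {n : ℕ} (N : Mealy n S A) (σ2 : List (S × A) → S → A → ℝ) (s0 : S)

/-- Observed word of a trajectory. -/
def obsW {n : ℕ} (ts : List (S × Fin n × A)) : List (S × A) := ts.map (fun t => (t.1, t.2.2))

lemma jointFold (ts : List (S × Fin n × A)) :
    (ts.foldl
      (fun (acc : ℝ × Option (S × Fin n × A) × List (S × A)) (t : S × Fin n × A) =>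
        (acc.1 *
          (match acc.2.1 with
            | none => (if t.1 = s0 then (1 : ℝ) else 0) * N.init t.2.1
            | some u => G.delta u.1 u.2.2 t.1 * N.up u.2.1 u.1 u.2.2 t.2.1) *
          (if G.P1 t.1 then N.next t.2.1 t.1 t.2.2 else σ2 acc.2.2 t.1 t.2.2),
         some t, acc.2.2 ++ [(t.1, t.2.2)]))
      ((1 : ℝ), (none : Option (S × Fin n × A)), ([] : List (S × A))))
    = (jointProb G N σ2 s0 ts, ts.getLast?, obsW ts) := by
  induction ts using List.reverseRecOn with
  | nil => rfl
  | append_singleton ts t ih =>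
      rw [List.foldl_append, ih]
      unfold jointProb
      rw [List.foldl_append, ih]
      refine Prod.ext ?_ (Prod.ext ?_ ?_)
      · rfl
      · simp
      · simp [obsW]

lemma jointProb_concat (ts : List (S × Fin n × A)) (t : S × Fin n × A) :
    jointProb G N σ2 s0 (ts ++ [t]) =
      jointProb G N σ2 s0 ts *
        (match ts.getLast? with
          | none => (if t.1 = s0 then (1 : ℝ) else 0) * N.init t.2.1
          | some u => G.delta u.1 u.2.2 t.1 * N.up u.2.1 u.1 u.2.2 t.2.1) *
        (if G.P1 t.1 then N.next t.2.1 t.1 t.2.2 else σ2 (obsW ts) t.1 t.2.2) := by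
  conv_lhs => unfold jointProb
  rw [List.foldl_append, jointFold]
  rfl

lemma jointProb_nil : jointProb G N σ2 s0 [] = 1 := rfl

lemma length_mkTraj {n : ℕ} (w : List (S × A)) (ms : Fin w.length → Fin n) :
    (mkTraj w ms).length = w.length := by simp [mkTraj]

lemma obsW_mkTraj {n : ℕ} (w : List (S × A)) (ms : Fin w.length → Fin n) :
    obsW (mkTraj w ms) = w := by
  simp only [obsW, mkTraj, List.map_ofFn, Function.comp_def]
  exact List.ofFn_get w

lemma getLast?_mkTraj {n : ℕ} (w : List (S × A)) (hw : w.length ≠ 0)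
    (ms : Fin w.length → Fin n) :
    (mkTraj w ms).getLast? =
      some ((w.get ⟨w.length - 1, Nat.sub_lt (Nat.pos_of_ne_zero hw) Nat.one_pos⟩).1,
        ms ⟨w.length - 1, Nat.sub_lt (Nat.pos_of_ne_zero hw) Nat.one_pos⟩,
        (w.get ⟨w.length - 1, Nat.sub_lt (Nat.pos_of_ne_zero hw) Nat.one_pos⟩).2) := by
  have hlen : (mkTraj w ms).length = w.length := length_mkTraj w ms
  have h1 : (mkTraj w ms).length - 1 < (mkTraj w ms).length := by
    rw [hlen]; exact Nat.sub_lt (Nat.pos_of_ne_zero hw) Nat.one_pos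
  rw [List.getLast?_eq_getElem?, List.getElem?_eq_getElem h1]
  simp only [mkTraj, List.getElem_ofFn]
  congr 1 <;> simp [mkTraj]

lemma mkTraj_concat {n : ℕ} (w : List (S × A)) (p : S × A)
    (ms : Fin (w ++ [p]).length → Fin n) :
    mkTraj (w ++ [p]) ms =
      mkTraj w (fun i => ms (Fin.castLE (by simp) i)) ++
        [(p.1, ms ⟨w.length, by simp⟩, p.2)] := by
  apply List.ext_getElem
  · simp [mkTraj]
  intro i h1 h2
  simp only [mkTraj, List.getElem_ofFn]
  rcases lt_or_ge i w.length with hi | hi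
  · rw [List.getElem_append_left (by simpa [mkTraj] using hi)]
    simp only [mkTraj, List.getElem_ofFn]
    have : (w ++ [p]).get ⟨i, by simp at h1 ⊢; omega⟩ = w.get ⟨i, hi⟩ := by
      simp [List.getElem_append_left hi]
    simp only [List.get_eq_getElem] at this ⊢
    rw [List.getElem_append_left hi]
    congr 1
  · have hi' : i = w.length := by simp [mkTraj] at h1; omega
    subst hi'
    rw [List.getElem_append_right (by simp [mkTraj])]
    simp [mkTraj, List.getElem_append_right, le_refl]

lemma sum_snoc_aux {n k : ℕ} (f : (Fin (k + 1) → Fin n) → ℝ) :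
    ∑ ms, f ms = ∑ ms' : Fin k → Fin n, ∑ m : Fin n, f (Fin.snoc ms' m) := by
  rw [← (Fin.snocEquiv (fun _ => Fin n)).sum_comp f, Fintype.sum_prod_type, Finset.sum_comm]
  rfl

lemma sum_cast_aux {n k k' : ℕ} (h : k = k') (f : (Fin k' → Fin n) → ℝ) :
    ∑ ms : Fin k' → Fin n, f ms
      = ∑ ms : Fin k → Fin n, f (fun i => ms (Fin.cast h.symm i)) := by
  subst h; rfl

/-- The "previous transition" factor. -/
noncomputable def Dfac (G : Game S A) (s0 : S) (w : List (S × A)) (s : S) : ℝ :=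
  match w.getLast? with
  | none => if s = s0 then (1 : ℝ) else 0
  | some q => G.delta q.1 q.2 s

lemma mkTraj_snoc {n : ℕ} (w : List (S × A)) (p : S × A)
    (h : (w ++ [p]).length = w.length + 1)
    (ms' : Fin w.length → Fin n) (m : Fin n) :
    mkTraj (w ++ [p]) (fun i => Fin.snoc (α := fun _ => Fin n) ms' m (Fin.cast h i)) =
      mkTraj w ms' ++ [(p.1, m, p.2)] := by
  rw [mkTraj_concat]
  congr 1
  · congr 1
    funext i
    have h1 : Fin.cast h (Fin.castLE (by simp) i) = Fin.castSucc i := rfl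
    rw [h1, Fin.snoc_castSucc]
  · have h2 : Fin.cast h (⟨w.length, by simp⟩ : Fin (w ++ [p]).length)
        = Fin.last w.length := rfl
    rw [h2, Fin.snoc_last]

lemma key_split (w : List (S × A)) (s : S) (a : A) (m : Fin n) :
    ∑ ms' : Fin w.length → Fin n, jointProb G N σ2 s0 (mkTraj w ms' ++ [(s, m, a)]) =
      Dfac G s0 w s * memNumer G N σ2 s0 w m *
        (if G.P1 s then N.next m s a else σ2 w s a) := by
  by_cases hw : w.length = 0
  · rw [List.length_eq_zero_iff] at hw
    subst hw
    have h0 : ∀ ms' : Fin (List.length ([] : List (S × A))) → Fin n,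
        mkTraj ([] : List (S × A)) ms' = [] := fun _ => by simp [mkTraj]
    rw [Finset.sum_congr rfl fun ms' _ => by
      rw [h0 ms', jointProb_concat, jointProb_nil]]
    rw [Finset.sum_const]
    have hcard : (Finset.univ : Finset (Fin (List.length ([] : List (S × A))) → Fin n)).card = 1 := by
      simp
    rw [hcard]
    simp only [memNumer, Dfac, List.getLast?_nil, obsW, List.map_nil, List.length_nil,
      dite_true, dif_pos]
    ring
  · have hL : w.length - 1 < w.length := Nat.sub_lt (Nat.pos_of_ne_zero hw) Nat.one_pos
    have hwl : w.getLast? = some (w.get ⟨w.length - 1, hL⟩) := by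
      rw [List.getLast?_eq_getElem?, List.getElem?_eq_getElem hL]
      rfl
    have step : ∀ ms' : Fin w.length → Fin n,
        jointProb G N σ2 s0 (mkTraj w ms' ++ [(s, m, a)]) =
          G.delta (w.get ⟨w.length - 1, hL⟩).1 (w.get ⟨w.length - 1, hL⟩).2 s *
            (jointProb G N σ2 s0 (mkTraj w ms') *
              N.up (ms' ⟨w.length - 1, hL⟩) (w.get ⟨w.length - 1, hL⟩).1
                (w.get ⟨w.length - 1, hL⟩).2 m) *
            (if G.P1 s then N.next m s a else σ2 w s a) := by
      intro ms'
      rw [jointProb_concat, getLast?_mkTraj w hw ms', obsW_mkTraj]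
      ring_nf
    rw [Finset.sum_congr rfl fun ms' _ => step ms']
    rw [← Finset.sum_mul, ← Finset.mul_sum]
    have hD : Dfac G s0 w s
        = G.delta (w.get ⟨w.length - 1, hL⟩).1 (w.get ⟨w.length - 1, hL⟩).2 s := by
      unfold Dfac
      rw [hwl]
    have hM : memNumer G N σ2 s0 w m
        = ∑ ms' : Fin w.length → Fin n,
            jointProb G N σ2 s0 (mkTraj w ms') *
              N.up (ms' ⟨w.length - 1, hL⟩) (w.get ⟨w.length - 1, hL⟩).1
                (w.get ⟨w.length - 1, hL⟩).2 m := by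
      unfold memNumer
      rw [dif_neg hw]
    rw [hD, hM]

lemma wordProb_concat (w : List (S × A)) (s : S) (a : A) :
    wordProb G N σ2 s0 (w ++ [(s, a)]) =
      Dfac G s0 w s * ∑ m, memNumer G N σ2 s0 w m *
        (if G.P1 s then N.next m s a else σ2 w s a) := by
  have h : w.length + 1 = (w ++ [(s, a)]).length := by simp
  unfold wordProb
  rw [sum_cast_aux h, sum_snoc_aux]
  have step : ∀ (ms' : Fin w.length → Fin n) (m : Fin n),
      jointProb G N σ2 s0 (mkTraj (w ++ [(s, a)])
          (fun i => Fin.snoc (α := fun _ => Fin n) ms' m (Fin.cast h.symm i))) =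
        jointProb G N σ2 s0 (mkTraj w ms' ++ [(s, m, a)]) := by
    intro ms' m
    rw [mkTraj_snoc w (s, a) h.symm ms' m]
  rw [Finset.sum_congr rfl fun ms' _ => Finset.sum_congr rfl fun m _ => step ms' m]
  rw [Finset.sum_comm]
  rw [Finset.sum_congr rfl fun m _ => key_split G N σ2 s0 w s a m]
  rw [Finset.mul_sum]
  exact Finset.sum_congr rfl fun m _ => by ring

lemma memNumer_concat (w : List (S × A)) (s : S) (a : A) (m : Fin n) :
    memNumer G N σ2 s0 (w ++ [(s, a)]) m =
      Dfac G s0 w s * ∑ m'', memNumer G N σ2 s0 w m'' *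
        (if G.P1 s then N.next m'' s a else σ2 w s a) * N.up m'' s a m := by
  have h : w.length + 1 = (w ++ [(s, a)]).length := by simp
  have hlen : ¬ (w ++ [(s, a)]).length = 0 := by simp
  have hL' : (w ++ [(s, a)]).length - 1 < (w ++ [(s, a)]).length :=
    Nat.sub_lt (Nat.pos_of_ne_zero hlen) Nat.one_pos
  have hget : (w ++ [(s, a)]).get ⟨(w ++ [(s, a)]).length - 1, hL'⟩ = (s, a) := by
    have hv : (w ++ [(s, a)]).length - 1 = w.length := by simp
    simp only [List.get_eq_getElem]
    rw [List.getElem_append_right (by omega)]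
    simp [hv]
  have hcastlast : ∀ pf : (w ++ [(s, a)]).length - 1 < (w ++ [(s, a)]).length,
      Fin.cast h.symm (⟨(w ++ [(s, a)]).length - 1, pf⟩ : Fin (w ++ [(s, a)]).length)
        = Fin.last w.length := by
    intro pf
    apply Fin.ext
    simp
  conv_lhs => unfold memNumer
  rw [dif_neg hlen]
  rw [sum_cast_aux h, sum_snoc_aux]
  have step : ∀ (ms' : Fin w.length → Fin n) (m'' : Fin n),
      jointProb G N σ2 s0 (mkTraj (w ++ [(s, a)])
          (fun i => Fin.snoc (α := fun _ => Fin n) ms' m'' (Fin.cast h.symm i))) *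
        N.up ((fun i => Fin.snoc (α := fun _ => Fin n) ms' m'' (Fin.cast h.symm i))
            ⟨(w ++ [(s, a)]).length - 1, hL'⟩)
          ((w ++ [(s, a)]).get ⟨(w ++ [(s, a)]).length - 1, hL'⟩).1
          ((w ++ [(s, a)]).get ⟨(w ++ [(s, a)]).length - 1, hL'⟩).2 m =
      jointProb G N σ2 s0 (mkTraj w ms' ++ [(s, m'', a)]) * N.up m'' s a m := by
    intro ms' m''
    rw [mkTraj_snoc w (s, a) h.symm ms' m'']
    simp only [hget, hcastlast hL', Fin.snoc_last]
  rw [Finset.sum_congr rfl fun ms' _ => Finset.sum_congr rfl fun m'' _ => step ms' m'']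
  rw [Finset.sum_comm]
  have inner : ∀ m'' : Fin n,
      ∑ ms' : Fin w.length → Fin n,
          jointProb G N σ2 s0 (mkTraj w ms' ++ [(s, m'', a)]) * N.up m'' s a m =
        Dfac G s0 w s * memNumer G N σ2 s0 w m'' *
          (if G.P1 s then N.next m'' s a else σ2 w s a) * N.up m'' s a m := by
    intro m''
    rw [← Finset.sum_mul, key_split G N σ2 s0 w s a m'']
  rw [Finset.sum_congr rfl fun m'' _ => inner m'']
  rw [Finset.mul_sum]
  exact Finset.sum_congr rfl fun m'' _ => by ring

lemma jointProb_nonneg (hN : ProperMealy N) (hσ2 : IsStrategy σ2)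
    (ts : List (S × Fin n × A)) : 0 ≤ jointProb G N σ2 s0 ts := by
  induction ts using List.reverseRecOn with
  | nil => rw [jointProb_nil]; exact zero_le_one
  | append_singleton ts t ih =>
      rw [jointProb_concat]
      refine mul_nonneg (mul_nonneg ih ?_) ?_
      · rcases h : ts.getLast? with _ | u
        · exact mul_nonneg (by positivity) (hN.1 _)
        · exact mul_nonneg (G.delta_nonneg _ _ _) (hN.2.2.2.2.1 _ _ _ _)
      · split
        · exact hN.2.2.1 _ _ _
        · exact hσ2.1 _ _ _

lemma memNumer_nonneg (hN : ProperMealy N) (hσ2 : IsStrategy σ2)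
    (w : List (S × A)) (m : Fin n) : 0 ≤ memNumer G N σ2 s0 w m := by
  unfold memNumer
  split
  · exact hN.1 m
  · exact Finset.sum_nonneg fun _ _ =>
      mul_nonneg (jointProb_nonneg G N σ2 s0 hN hσ2 _) (hN.2.2.2.2.1 _ _ _ _)

lemma wordProb_nil : wordProb G N σ2 s0 [] = 1 := by
  simp [wordProb, mkTraj, jointProb_nil]

lemma wordProb_eq_sum (hN : ProperMealy N) (w : List (S × A)) :
    wordProb G N σ2 s0 w = ∑ m, memNumer G N σ2 s0 w m := by
  by_cases hw : w.length = 0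
  · rw [List.length_eq_zero_iff] at hw; subst hw
    rw [wordProb_nil]
    simp only [memNumer, dif_pos rfl]
    exact (hN.2.1).symm
  · unfold memNumer
    simp only [dif_neg hw]
    rw [Finset.sum_comm]
    unfold wordProb
    refine Finset.sum_congr rfl fun ms _ => ?_
    rw [← Finset.mul_sum, hN.2.2.2.2.2, mul_one]

lemma wordProb_nonneg (hN : ProperMealy N) (hσ2 : IsStrategy σ2) (w : List (S × A)) :
    0 ≤ wordProb G N σ2 s0 w := by
  unfold wordProb
  exact Finset.sum_nonneg fun _ _ => jointProb_nonneg G N σ2 s0 hN hσ2 _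

lemma prefix_pos (hN : ProperMealy N) (hσ2 : IsStrategy σ2) (w : List (S × A)) (s : S) (a : A)
    (hpos : 0 < wordProb G N σ2 s0 (w ++ [(s, a)])) : 0 < wordProb G N σ2 s0 w := by
  rcases (wordProb_nonneg G N σ2 s0 hN hσ2 w).lt_or_eq with h | h
  · exact h
  · exfalso
    have hs : ∑ m, memNumer G N σ2 s0 w m = 0 := by
      rw [← wordProb_eq_sum G N σ2 s0 hN w, ← h]
    have hz : ∀ m, memNumer G N σ2 s0 w m = 0 := fun m =>
      (Finset.sum_eq_zero_iff_of_nonneg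
        (fun m' _ => memNumer_nonneg G N σ2 s0 hN hσ2 w m')).mp hs m (Finset.mem_univ m)
    rw [wordProb_concat] at hpos
    simp only [hz, zero_mul, Finset.sum_const_zero, mul_zero] at hpos
    exact lt_irrefl 0 hpos

lemma condMem_concat_P1 (hN : ProperMealy N) (hσ2 : IsStrategy σ2)
    (w : List (S × A)) (s : S) (a : A)
    (hpos : 0 < wordProb G N σ2 s0 (w ++ [(s, a)])) (hP1 : G.P1 s = true) (m : Fin n) :
    condMem G N σ2 s0 (w ++ [(s, a)]) m =
      (∑ m', condMem G N σ2 s0 w m' * N.up m' s a m * N.next m' s a) /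
        (∑ m', condMem G N σ2 s0 w m' * N.next m' s a) := by
  have hP := prefix_pos G N σ2 s0 hN hσ2 w s a hpos
  have hPne : wordProb G N σ2 s0 w ≠ 0 := hP.ne'
  have hW := wordProb_concat G N σ2 s0 w s a
  have hMn := memNumer_concat G N σ2 s0 w s a m
  simp only [hP1, if_true] at hW hMn
  have hne : Dfac G s0 w s * (∑ m', memNumer G N σ2 s0 w m' * N.next m' s a) ≠ 0 := by
    have := hpos.ne'
    rw [hW] at this
    exact this
  have hD : Dfac G s0 w s ≠ 0 := left_ne_zero_of_mul hne
  have hS : (∑ m', memNumer G N σ2 s0 w m' * N.next m' s a) ≠ 0 := right_ne_zero_of_mul hne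
  unfold condMem
  rw [hMn, hW, mul_div_mul_left _ _ hD]
  have h1 : ∑ m', memNumer G N σ2 s0 w m' / wordProb G N σ2 s0 w * N.up m' s a m * N.next m' s a
      = (∑ m', memNumer G N σ2 s0 w m' * N.next m' s a * N.up m' s a m)
          / wordProb G N σ2 s0 w := by
    rw [Finset.sum_div]
    exact Finset.sum_congr rfl fun m' _ => by ring
  have h2 : ∑ m', memNumer G N σ2 s0 w m' / wordProb G N σ2 s0 w * N.next m' s a
      = (∑ m', memNumer G N σ2 s0 w m' * N.next m' s a) / wordProb G N σ2 s0 w := by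
    rw [Finset.sum_div]
    exact Finset.sum_congr rfl fun m' _ => by ring
  rw [h1, h2]
  field_simp

lemma condMem_concat_P2 (hN : ProperMealy N) (hσ2 : IsStrategy σ2)
    (w : List (S × A)) (s : S) (a : A)
    (hpos : 0 < wordProb G N σ2 s0 (w ++ [(s, a)])) (hP1 : G.P1 s = false) (m : Fin n) :
    condMem G N σ2 s0 (w ++ [(s, a)]) m =
      ∑ m', condMem G N σ2 s0 w m' * N.up m' s a m := by
  have hP := prefix_pos G N σ2 s0 hN hσ2 w s a hpos
  have hPne : wordProb G N σ2 s0 w ≠ 0 := hP.ne'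
  have hW := wordProb_concat G N σ2 s0 w s a
  have hMn := memNumer_concat G N σ2 s0 w s a m
  simp only [hP1, Bool.false_eq_true, if_false] at hW hMn
  have hsum : ∑ m', memNumer G N σ2 s0 w m' * σ2 w s a
      = wordProb G N σ2 s0 w * σ2 w s a := by
    rw [← Finset.sum_mul, ← wordProb_eq_sum G N σ2 s0 hN w]
  rw [hsum] at hW
  have hne : Dfac G s0 w s * (wordProb G N σ2 s0 w * σ2 w s a) ≠ 0 := by
    have := hpos.ne'
    rw [hW] at this
    exact this
  have hD : Dfac G s0 w s ≠ 0 := left_ne_zero_of_mul hne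
  have hc : σ2 w s a ≠ 0 := right_ne_zero_of_mul (right_ne_zero_of_mul hne)
  unfold condMem
  rw [hMn, hW, mul_div_mul_left _ _ hD]
  have h1 : ∑ m'', memNumer G N σ2 s0 w m'' * σ2 w s a * N.up m'' s a m
      = (∑ m'', memNumer G N σ2 s0 w m'' * N.up m'' s a m) * σ2 w s a := by
    rw [Finset.sum_mul]
    exact Finset.sum_congr rfl fun m'' _ => by ring
  rw [h1, mul_comm (wordProb G N σ2 s0 w) (σ2 w s a), mul_comm
    ((∑ m'', memNumer G N σ2 s0 w m'' * N.up m'' s a m)) (σ2 w s a),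
    mul_div_mul_left _ _ hc]
  rw [Finset.sum_div]
  exact Finset.sum_congr rfl fun m'' _ => by ring

lemma condMem_eq_memDist (hN : ProperMealy N) (hσ2 : IsStrategy σ2) (w : List (S × A))
    (hpos : 0 < wordProb G N σ2 s0 w) (m : Fin n) :
    condMem G N σ2 s0 w m = memDist G N w m := by
  induction w using List.reverseRecOn generalizing m with
  | nil =>
      unfold condMem memDist
      rw [wordProb_nil]
      simp [memNumer]
  | append_singleton w p ih =>
      obtain ⟨s, a⟩ := p
      have hP := prefix_pos G N σ2 s0 hN hσ2 w s a hpos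
      have ih' : ∀ m', condMem G N σ2 s0 w m' = memDist G N w m' := fun m' => ih hP m'
      have hmd : memDist G N (w ++ [(s, a)]) m = stepDist G N (memDist G N w) s a m := by
        unfold memDist
        rw [List.foldl_append]
        rfl
      rw [hmd]
      unfold stepDist
      by_cases hP1 : G.P1 s = true
      · have hden0 : (∑ m', memDist G N w m' * N.next m' s a) ≠ 0 := by
          simp only [← ih']
          have h1 : ∑ m', condMem G N σ2 s0 w m' * N.next m' s a
              = (∑ m', memNumer G N σ2 s0 w m' * N.next m' s a) / wordProb G N σ2 s0 w := by
            rw [Finset.sum_div]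
            exact Finset.sum_congr rfl fun m' _ => by rw [condMem]; ring
          rw [h1]
          refine div_ne_zero ?_ hP.ne'
          have hW := wordProb_concat G N σ2 s0 w s a
          simp only [hP1, if_true] at hW
          have := hpos.ne'
          rw [hW] at this
          exact right_ne_zero_of_mul this
        rw [if_pos ⟨hP1, hden0⟩]
        rw [condMem_concat_P1 G N σ2 s0 hN hσ2 w s a hpos hP1 m]
        simp only [ih']
      · have hP1' : G.P1 s = false := by
          simpa using hP1
        rw [if_neg (by rintro ⟨h1, -⟩; rw [hP1'] at h1; exact absurd h1 (by simp))]
        rw [condMem_concat_P2 G N σ2 s0 hN hσ2 w s a hpos hP1' m]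
        simp only [ih']

end AuxProof

/-- In the induced Markov chain, the conditional distribution over memory
states given the observed word satisfies the stated recursive formulas: at
Player-1 states the update is Bayesian (conditioned on the played action), at
Player-2 states it is the plain mixture; and it does not depend on the
opposing strategy. -/
theorem condMem_recursion (S A : Type) [Fintype S] [Fintype A]
    (G : Game S A) (n : ℕ) (N : Mealy n S A) (hN : ProperMealy N)
    (σ2 : List (S × A) → S → A → ℝ) (hσ2 : IsStrategy σ2)
    (s0 : S) (w' : List (S × A)) (s : S) (a : A)
    (hpos : 0 < wordProb G N σ2 s0 (w' ++ [(s, a)])) :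
    (G.P1 s = true →
      ∀ m, condMem G N σ2 s0 (w' ++ [(s, a)]) m =
        (∑ m', condMem G N σ2 s0 w' m' * N.up m' s a m * N.next m' s a) /
          (∑ m', condMem G N σ2 s0 w' m' * N.next m' s a)) ∧
    (G.P1 s = false →
      ∀ m, condMem G N σ2 s0 (w' ++ [(s, a)]) m =
        ∑ m', condMem G N σ2 s0 w' m' * N.up m' s a m) ∧
    (∀ σ2', IsStrategy σ2' → 0 < wordProb G N σ2' s0 (w' ++ [(s, a)]) →
      ∀ m, condMem G N σ2 s0 (w' ++ [(s, a)]) m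
          = condMem G N σ2' s0 (w' ++ [(s, a)]) m) := by
  refine ⟨fun hP1 m => condMem_concat_P1 G N σ2 s0 hN hσ2 w' s a hpos hP1 m,
          fun hP1 m => condMem_concat_P2 G N σ2 s0 hN hσ2 w' s a hpos hP1 m,
          fun σ2' hσ2' hpos' m => ?_⟩
  rw [condMem_eq_memDist G N σ2 s0 hN hσ2 _ hpos m,
      condMem_eq_memDist G N σ2' s0 hN hσ2' _ hpos' m]
end
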